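/- arXiv:2601.22774 — 3 statements merged into one kernel-verified Lean document; each statement's English description precedes it below -/
import Mathlib

section
/- Let G be a generalized matrix algebra (as in the context) satisfying hypotheses (H1)–(H5) listed in the context, and let ψ : G × G × G → G be a 3-Lie derivation with ψ(e,e,e) ∈ Z(G). Then ψ(x,y,z) ∈ Z(G) for all x, y, z ∈ A ∪ B. -/
/-- Commutator `[x,y] = x*y - y*x`. -/
def brk {G : Type*} [Ring G] (x y : G) : G := x * y - y * x

/-- `corner p q x` says `x` lies in the Peirce corner `p * G * q`. -/
def corner {G : Type*} [Ring G] (p q x : G) : Prop := p * x * q = x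

/-- `central z` says `z` lies in the center of `G`. -/
def central {G : Type*} [Ring G] (z : G) : Prop := ∀ g : G, z * g = g * z

/-- Membership in the center of the corner algebra `p*G*p`. -/
def cornerCentral {G : Type*} [Ring G] (p a : G) : Prop :=
  corner p p a ∧ ∀ a', corner p p a' → a * a' = a' * a

/-- Membership in `A ∪ B` where `A = eGe`, `B = fGf`, `f = 1 - e`. -/
def inAB {G : Type*} [Ring G] (e x : G) : Prop :=
  corner e e x ∨ corner (1 - e) (1 - e) x

/-- A Lie biderivation: `R`-bilinear and a Lie derivation in each argument. -/
def IsLieBider (R : Type*) [CommRing R] {A : Type*} [Ring A] [Algebra R A]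
    (φ : A → A → A) : Prop :=
  (∀ y : A, IsLinearMap R fun x => φ x y) ∧
  (∀ x : A, IsLinearMap R fun y => φ x y) ∧
  (∀ y a b : A, φ (brk a b) y = brk (φ a y) b + brk a (φ b y)) ∧
  (∀ x a b : A, φ x (brk a b) = brk (φ x a) b + brk a (φ x b))

/-- A 3-Lie derivation: `R`-linear in each argument and a Lie derivation in
each argument when the other two are fixed. -/
def IsLieDer3 (R : Type*) [CommRing R] {G : Type*} [Ring G] [Algebra R G]
    (ψ : G → G → G → G) : Prop :=
  (∀ y z : G, IsLinearMap R fun x => ψ x y z) ∧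
  (∀ x z : G, IsLinearMap R fun y => ψ x y z) ∧
  (∀ x y : G, IsLinearMap R fun z => ψ x y z) ∧
  (∀ y z a b : G, ψ (brk a b) y z = brk (ψ a y z) b + brk a (ψ b y z)) ∧
  (∀ x z a b : G, ψ x (brk a b) z = brk (ψ x a z) b + brk a (ψ x b z)) ∧
  (∀ x y a b : G, ψ x y (brk a b) = brk (ψ x y a) b + brk a (ψ x y b))

/-- Iterated bracket `[x 0, [x 1, …, [x (n-1), x0]…]]`. -/
def iterBr {G : Type*} [Ring G] : {n : ℕ} → (Fin n → G) → G → G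
  | 0, _, x0 => x0
  | _ + 1, x, x0 => brk (x 0) (iterBr (Fin.tail x) x0)

/-- An `n`-Lie derivation: `R`-linear in each argument and a Lie derivation in
each argument when the other arguments are fixed. -/
def IsNLieDer (R : Type*) [CommRing R] {G : Type*} [Ring G] [Algebra R G]
    {n : ℕ} (φ : (Fin n → G) → G) : Prop :=
  ∀ (i : Fin n) (x : Fin n → G),
    (IsLinearMap R fun t => φ (Function.update x i t)) ∧
    ∀ a b : G, φ (Function.update x i (brk a b)) =
      brk (φ (Function.update x i a)) b + brk a (φ (Function.update x i b))

/-- `M = eG(1-e)` is faithful as a left `eGe`-module and right `(1-e)G(1-e)`-module. -/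
def Faithful {G : Type*} [Ring G] (e : G) : Prop :=
  (∀ a, corner e e a → (∀ m, corner e (1 - e) m → a * m = 0) → a = 0) ∧
  (∀ b, corner (1 - e) (1 - e) b → (∀ m, corner e (1 - e) m → m * b = 0) → b = 0)

/-- (H1): `Z(A) = e Z(G) e` and `Z(B) = f Z(G) f`. -/
def H1P {G : Type*} [Ring G] (e : G) : Prop :=
  (∀ a, cornerCentral e a → ∃ w, central w ∧ a = e * w * e) ∧
  (∀ b, cornerCentral (1 - e) b → ∃ w, central w ∧ b = (1 - e) * w * (1 - e))

/-- The corner algebra `pGp` contains no nonzero central ideal. -/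
def NoCentralIdeal {G : Type*} [Ring G] (p : G) : Prop :=
  ¬ ∃ c : G, c ≠ 0 ∧ cornerCentral p c ∧ ∀ a, corner p p a → cornerCentral p (a * c)

/-- (H2): `A` or `B` contains no nonzero central ideal. -/
def H2P {G : Type*} [Ring G] (e : G) : Prop :=
  NoCentralIdeal e ∨ NoCentralIdeal (1 - e)

/-- (H3): central elements annihilating a nonzero element vanish. -/
def H3P (G : Type*) [Ring G] : Prop :=
  ∀ α a : G, central α → α * a = 0 → a ≠ 0 → α = 0

/-- (H4): if `MN = 0 = NM` then `A` or `B` is noncommutative. -/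
def H4P {G : Type*} [Ring G] (e : G) : Prop :=
  (∀ m n, corner e (1 - e) m → corner (1 - e) e n → m * n = 0 ∧ n * m = 0) →
    (∃ a1 a2, corner e e a1 ∧ corner e e a2 ∧ a1 * a2 ≠ a2 * a1) ∨
    (∃ b1 b2, corner (1 - e) (1 - e) b1 ∧ corner (1 - e) (1 - e) b2 ∧ b1 * b2 ≠ b2 * b1)

/-- (H3'): for `n ∈ N`, `Mn = 0 = nM` implies `n = 0`. -/
def H3prime {G : Type*} [Ring G] (e : G) : Prop :=
  ∀ n, corner (1 - e) e n → (∀ m, corner e (1 - e) m → m * n = 0 ∧ n * m = 0) → n = 0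

/-- (H4'): for `m ∈ M`, `Nm = 0 = mN` implies `m = 0`. -/
def H4prime {G : Type*} [Ring G] (e : G) : Prop :=
  ∀ m, corner e (1 - e) m → (∀ n, corner (1 - e) e n → n * m = 0 ∧ m * n = 0) → m = 0

/-- (H5): every special pair of bimodule homomorphisms has standard form. -/
def H5P (R : Type*) [CommRing R] {G : Type*} [Ring G] [Algebra R G] (e : G) : Prop :=
  ∀ F E : G → G,
    (∀ m, corner e (1 - e) m → corner e (1 - e) (F m)) →
    (∀ n, corner (1 - e) e n → corner (1 - e) e (E n)) →
    (∀ m m', corner e (1 - e) m → corner e (1 - e) m' → F (m + m') = F m + F m') →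
    (∀ (r : R) (m), corner e (1 - e) m → F (r • m) = r • F m) →
    (∀ n n', corner (1 - e) e n → corner (1 - e) e n' → E (n + n') = E n + E n') →
    (∀ (r : R) (n), corner (1 - e) e n → E (r • n) = r • E n) →
    (∀ a m b, corner e e a → corner e (1 - e) m → corner (1 - e) (1 - e) b →
      F (a * m * b) = a * F m * b) →
    (∀ b n a, corner (1 - e) (1 - e) b → corner (1 - e) e n → corner e e a →
      E (b * n * a) = b * E n * a) →
    (∀ m n, corner e (1 - e) m → corner (1 - e) e n →
      F m * n + m * E n = 0 ∧ n * F m + E n * m = 0) →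
    ∃ ω0 ω1 : G, cornerCentral e ω0 ∧ cornerCentral (1 - e) ω1 ∧
      (∀ m, corner e (1 - e) m → F m = ω0 * m + m * ω1) ∧
      (∀ n, corner (1 - e) e n → E n = -(n * ω0) - ω1 * n)

/-- (H5'): every `R`-linear derivation of `G` is inner. -/
def DerInner (R : Type*) [CommRing R] (G : Type*) [Ring G] [Algebra R G] : Prop :=
  ∀ d : G → G, IsLinearMap R d → (∀ x y : G, d (x * y) = d x * y + x * d y) →
    ∃ g : G, ∀ x : G, d x = g * x - x * g


theorem threeLieDer_central_values_on_AB {R : Type*} [CommRing R]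
    (htf : ∀ r : R, r + r = 0 → r = 0)
    {G : Type*} [Ring G] [Algebra R G] (e : G) (he : e * e = e)
    (he0 : e ≠ 0) (he1 : e ≠ 1) (hf : Faithful e)
    (h1 : H1P e) (h2 : H2P e) (h3 : H3P G) (h4 : H4P e) (h5 : H5P R e)
    (ψ : G → G → G → G) (hψ : IsLieDer3 R ψ) (hc : central (ψ e e e)) :
    ∀ x y z : G, inAB e x → inAB e y → inAB e z → central (ψ x y z) := by
  obtain ⟨l1, l2, l3, d1, d2, d3⟩ := hψ
  obtain ⟨v, hv⟩ : ∃ v : G, v = 1 - e := ⟨_, rfl⟩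
  -- basic idempotent algebra
  have hef : e * v = 0 := by rw [hv, mul_sub, mul_one, he, sub_self]
  have hfe : v * e = 0 := by rw [hv, sub_mul, one_mul, he, sub_self]
  have hff : v * v = v := by rw [hv, mul_sub, mul_one, sub_mul, one_mul, he, sub_self, sub_zero]
  -- zero values of ψ
  have psi0_1 : ∀ u g : G, ψ 0 u g = 0 := fun u g => (l1 u g).map_zero
  have psi0_2 : ∀ x g : G, ψ x 0 g = 0 := fun x g => (l2 x g).map_zero
  have psi0_3 : ∀ x u : G, ψ x u 0 = 0 := fun x u => (l3 x u).map_zero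
  -- commuting with e
  have hcomm : ∀ u : G, inAB e u → e * u = u * e := by
    intro u hu
    rcases hu with h | h
    · have h' : e * u * e = u := h
      have h1 : e * u = u := by
        conv_lhs => rw [← h']
        simp only [← mul_assoc]
        rw [he]
        exact h'
      have h2 : u * e = u := by
        conv_lhs => rw [← h']
        simp only [mul_assoc]
        rw [he, ← mul_assoc]
        exact h'
      rw [h1, h2]
    · have h' : v * u * v = u := by rw [hv]; exact h
      have h1 : e * u = 0 := by
        conv_lhs => rw [← h']
        simp only [← mul_assoc]
        rw [hef, zero_mul, zero_mul]
      have h2 : u * e = 0 := by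
        conv_lhs => rw [← h']
        simp only [mul_assoc]
        rw [hfe, mul_zero, mul_zero]
      rw [h1, h2]
  have hcomm' : ∀ u : G, e * u = u * e → u * v = v * u := by
    intro u hu
    rw [hv, mul_sub, sub_mul, mul_one, one_mul, hu]
  -- corner element facts
  have hm_em : ∀ m : G, e * m * v = m → e * m = m := by
    intro m hm
    conv_lhs => rw [← hm]
    simp only [← mul_assoc]
    rw [he]
    exact hm
  have hm_mf : ∀ m : G, e * m * v = m → m * v = m := by
    intro m hm
    conv_lhs => rw [← hm]
    rw [mul_assoc (e * m) v v, hff]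
    exact hm
  have hm_me : ∀ m : G, e * m * v = m → m * e = 0 := by
    intro m hm
    conv_lhs => rw [← hm]
    rw [mul_assoc (e * m) v e, hfe, mul_zero]
  have hn_fn : ∀ n : G, v * n * e = n → v * n = n := by
    intro n hn
    conv_lhs => rw [← hn]
    simp only [← mul_assoc]
    rw [hff]
    exact hn
  have hn_ne : ∀ n : G, v * n * e = n → n * e = n := by
    intro n hn
    conv_lhs => rw [← hn]
    rw [mul_assoc (v * n) e e, he]
    exact hn
  have hn_en : ∀ n : G, v * n * e = n → e * n = 0 := by
    intro n hn
    conv_lhs => rw [← hn]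
    simp only [← mul_assoc]
    rw [hef, zero_mul, zero_mul]
  -- brk helpers
  have brk_of_comm : ∀ u w : G, u * w = w * u → brk u w = 0 := by
    intro u w h
    simp [brk, h]
  have comm_of_brk : ∀ u w : G, brk u w = 0 → u * w = w * u := by
    intro u w h
    have h' : u * w - w * u = 0 := h
    exact sub_eq_zero.mp h'
  have brk_central_left : ∀ c g : G, central c → brk c g = 0 :=
    fun c g h => brk_of_comm c g (h g)
  have brk_central_right : ∀ c g : G, central c → brk g c = 0 :=
    fun c g h => brk_of_comm g c (h g).symm
  have neg_brk : ∀ a b : G, -brk a b = brk b a := by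
    intro a b
    simp only [brk, neg_sub]
  have brk_neg_right : ∀ a p : G, brk a (-p) = -brk a p := by
    intro a p
    simp only [brk, mul_neg, neg_mul]
    abel
  have jac : ∀ a b h : G, brk a (brk b h) - brk b (brk a h) = brk (brk a b) h := by
    intro a b h
    simp only [brk]
    noncomm_ring
  have brk_em : ∀ m : G, e * m * v = m → brk e m = m := by
    intro m hm
    simp only [brk]
    rw [hm_em m hm, hm_me m hm, sub_zero]
  have brk_ne : ∀ n : G, v * n * e = n → brk n e = n := by
    intro n hn
    simp only [brk]
    rw [hn_ne n hn, hn_en n hn, sub_zero]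
  -- extraction lemmas
  have X1 : ∀ Y : G, e * brk e Y * v = e * Y * v := by
    intro Y
    simp only [brk, mul_sub, sub_mul]
    have h1 : e * (e * Y) * v = e * Y * v := by rw [← mul_assoc, he]
    have h2 : e * (Y * e) * v = 0 := by
      rw [← mul_assoc, mul_assoc (e * Y) e v, hef, mul_zero]
    rw [h1, h2, sub_zero]
  have X2 : ∀ Y : G, v * brk e Y * e = -(v * Y * e) := by
    intro Y
    simp only [brk, mul_sub, sub_mul]
    have h1 : v * (e * Y) * e = 0 := by rw [← mul_assoc, hfe, zero_mul, zero_mul]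
    have h2 : v * (Y * e) * e = v * Y * e := by
      rw [← mul_assoc, mul_assoc (v * Y) e e, he]
    rw [h1, h2, zero_sub]
  have X2' : ∀ Y : G, v * brk Y e * e = v * Y * e := by
    intro Y
    simp only [brk, mul_sub, sub_mul]
    have h1 : v * (e * Y) * e = 0 := by rw [← mul_assoc, hfe, zero_mul, zero_mul]
    have h2 : v * (Y * e) * e = v * Y * e := by
      rw [← mul_assoc, mul_assoc (v * Y) e e, he]
    rw [h1, h2, sub_zero]
  have X3 : ∀ u Y : G, e * u = u * e → e * brk u Y * v = brk u (e * Y * v) := by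
    intro u Y hu
    have huf := hcomm' u hu
    simp only [brk, mul_sub, sub_mul]
    have h1 : e * (u * Y) * v = u * (e * Y * v) := by
      rw [← mul_assoc, hu]
      simp only [mul_assoc]
    have h2 : e * (Y * u) * v = e * Y * v * u := by
      rw [← mul_assoc, mul_assoc (e * Y) u v, huf, ← mul_assoc]
    rw [h1, h2]
  have X4 : ∀ u Y : G, e * u = u * e → v * brk u Y * e = brk u (v * Y * e) := by
    intro u Y hu
    have huf := hcomm' u hu
    simp only [brk, mul_sub, sub_mul]
    have h1 : v * (u * Y) * e = u * (v * Y * e) := by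
      rw [← mul_assoc, ← huf]
      simp only [mul_assoc]
    have h2 : v * (Y * u) * e = v * Y * e * u := by
      rw [← mul_assoc, mul_assoc (v * Y) u e, ← hu, ← mul_assoc]
    rw [h1, h2]
  have X5 : ∀ w m : G, e * w = w * e → e * m * v = m →
      e * brk w m * v = brk w m := by
    intro w m hew hm
    have hwf := hcomm' w hew
    simp only [brk, mul_sub, sub_mul]
    have h1 : e * (w * m) * v = w * m := by
      rw [← mul_assoc, hew, mul_assoc w e m, hm_em m hm, mul_assoc, hm_mf m hm]
    have h2 : e * (m * w) * v = m * w := by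
      rw [← mul_assoc, hm_em m hm, mul_assoc m w v, hwf, ← mul_assoc, hm_mf m hm]
    rw [h1, h2]
  have X6 : ∀ w n : G, e * w = w * e → v * n * e = n →
      v * brk w n * e = brk w n := by
    intro w n hew hn
    have hwf := hcomm' w hew
    simp only [brk, mul_sub, sub_mul]
    have h1 : v * (w * n) * e = w * n := by
      rw [← mul_assoc, ← hwf, mul_assoc w v n, hn_fn n hn, mul_assoc, hn_ne n hn]
    have h2 : v * (n * w) * e = n * w := by
      rw [← mul_assoc, hn_fn n hn, mul_assoc n w e, ← hew, ← mul_assoc, hn_ne n hn]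
    rw [h1, h2]
  have X6' : ∀ w n : G, e * w = w * e → v * n * e = n →
      v * brk n w * e = brk n w := by
    intro w n hew hn
    have hwf := hcomm' w hew
    simp only [brk, mul_sub, sub_mul]
    have h1 : v * (n * w) * e = n * w := by
      rw [← mul_assoc, hn_fn n hn, mul_assoc n w e, ← hew, ← mul_assoc, hn_ne n hn]
    have h2 : v * (w * n) * e = w * n := by
      rw [← mul_assoc, ← hwf, mul_assoc w v n, hn_fn n hn, mul_assoc, hn_ne n hn]
    rw [h1, h2]
  -- pull-out identities
  have P1 : ∀ x u g : G, e * x = x * e → brk e (ψ x u g) = brk x (ψ e u g) := by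
    intro x u g hx
    have h0 := d1 u g e x
    rw [brk_of_comm e x hx, psi0_1 u g] at h0
    conv_rhs => rw [← neg_brk]
    rw [eq_neg_iff_add_eq_zero, add_comm]
    exact h0.symm
  have P2 : ∀ x y g : G, e * y = y * e → brk e (ψ x y g) = brk y (ψ x e g) := by
    intro x y g hy
    have h0 := d2 x g e y
    rw [brk_of_comm e y hy, psi0_2 x g] at h0
    conv_rhs => rw [← neg_brk]
    rw [eq_neg_iff_add_eq_zero, add_comm]
    exact h0.symm
  -- centrality criterion
  have Crit : ∀ w : G, e * w = w * e →
      (∀ m, e * m * v = m → brk w m = 0) →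
      (∀ n, v * n * e = n → brk w n = 0) → central w := by
    intro w hew hM hN g
    have hwf := hcomm' w hew
    have hg : g = e * g * e + e * g * v + v * g * e + v * g * v := by
      rw [hv]; noncomm_ring
    have hmcor : e * (e * g * v) * v = e * g * v := by
      simp only [← mul_assoc]
      rw [he, mul_assoc (e * g) v v, hff]
    have hncor : v * (v * g * e) * e = v * g * e := by
      simp only [← mul_assoc]
      rw [hff, mul_assoc (v * g) e e, he]
    have hA : w * (e * g * e) = (e * g * e) * w := by
      set aG := e * g * e with haG
      have hea : e * aG = aG := by
        rw [haG]
        simp only [← mul_assoc]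
        rw [he]
      have hae : aG * e = aG := by
        rw [haG, mul_assoc (e * g) e e, he]
      have hcor : e * (w * aG - aG * w) * e = w * aG - aG * w := by
        rw [mul_sub, sub_mul]
        have t1 : e * (w * aG) * e = w * aG := by
          rw [← mul_assoc, hew, mul_assoc w e aG, hea, mul_assoc, hae]
        have t2 : e * (aG * w) * e = aG * w := by
          rw [← mul_assoc, hea, mul_assoc aG w e, ← hew, ← mul_assoc, hae]
        rw [t1, t2]
      have hkill : ∀ m, corner e (1 - e) m → (w * aG - aG * w) * m = 0 := by
        intro m hm
        have hm' : e * m * v = m := by rw [hv]; exact hm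
        have hm1 : e * (aG * m) * v = aG * m := by
          rw [← mul_assoc, hea, mul_assoc aG m v, hm_mf m hm']
        have c1 : w * (aG * m) = (aG * m) * w := comm_of_brk _ _ (hM (aG * m) hm1)
        have c2 : w * m = m * w := comm_of_brk _ _ (hM m hm')
        rw [sub_mul, mul_assoc w aG m, c1, mul_assoc aG w m, c2, ← mul_assoc]
        exact sub_self _
      have h0 := hf.1 (w * aG - aG * w) hcor hkill
      exact sub_eq_zero.mp h0
    have hB : w * (v * g * v) = (v * g * v) * w := by
      set bG := v * g * v with hbG
      have hfb : v * bG = bG := by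
        rw [hbG]
        simp only [← mul_assoc]
        rw [hff]
      have hbf : bG * v = bG := by
        rw [hbG, mul_assoc (v * g) v v, hff]
      have hcor : (1 - e) * (bG * w - w * bG) * (1 - e) = bG * w - w * bG := by
        rw [← hv, mul_sub, sub_mul]
        have t1 : v * (bG * w) * v = bG * w := by
          rw [← mul_assoc, hfb, mul_assoc bG w v, hwf, ← mul_assoc, hbf]
        have t2 : v * (w * bG) * v = w * bG := by
          rw [← mul_assoc, ← hwf, mul_assoc w v bG, hfb, mul_assoc, hbf]
        rw [t1, t2]
      have hkill : ∀ m, corner e (1 - e) m → m * (bG * w - w * bG) = 0 := by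
        intro m hm
        have hm' : e * m * v = m := by rw [hv]; exact hm
        have hm1 : e * (m * bG) * v = m * bG := by
          rw [← mul_assoc, hm_em m hm', mul_assoc m bG v, hbf]
        have c1 : w * (m * bG) = (m * bG) * w := comm_of_brk _ _ (hM (m * bG) hm1)
        have c2 : w * m = m * w := comm_of_brk _ _ (hM m hm')
        rw [mul_sub, ← mul_assoc m bG w, ← c1, ← mul_assoc m w bG, ← c2, mul_assoc w m bG]
        exact sub_self _
      have h0 := hf.2 (bG * w - w * bG) hcor hkill
      exact (sub_eq_zero.mp h0).symm
    have hMp : w * (e * g * v) = (e * g * v) * w :=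
      comm_of_brk _ _ (hM _ hmcor)
    have hNp : w * (v * g * e) = (v * g * e) * w :=
      comm_of_brk _ _ (hN _ hncor)
    calc w * g = w * (e * g * e + e * g * v + v * g * e + v * g * v) := by
          rw [← hg]
      _ = w * (e * g * e) + w * (e * g * v) + w * (v * g * e) + w * (v * g * v) := by
          simp only [mul_add]
      _ = (e * g * e) * w + (e * g * v) * w + (v * g * e) * w + (v * g * v) * w := by
          rw [hA, hMp, hNp, hB]
      _ = (e * g * e + e * g * v + v * g * e + v * g * v) * w := by
          simp only [add_mul]
      _ = g * w := by rw [← hg]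
  -- Level 1 : ψ e e z is central
  have L1 : ∀ z : G, e * z = z * e → central (ψ e e z) := by
    intro z hz
    have h0 := d3 e e e z
    rw [brk_of_comm e z hz, psi0_3 e e, brk_central_left _ z hc, zero_add] at h0
    have ha : brk e (ψ e e z) = 0 := h0.symm
    have hew : e * ψ e e z = ψ e e z * e := comm_of_brk _ _ ha
    apply Crit _ hew
    · intro m hm
      have h0' := d1 e z e m
      rw [brk_em m hm] at h0'
      have hh1 : e * ψ m e z * v
          = e * (brk (ψ e e z) m + brk e (ψ m e z)) * v := by rw [← h0']
      rw [mul_add, add_mul, X1 (ψ m e z), X5 _ m hew hm] at hh1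
      exact right_eq_add.mp hh1
    · intro n hn
      have h0' := d1 e z n e
      rw [brk_ne n hn] at h0'
      have hh1 : v * ψ n e z * e
          = v * (brk (ψ n e z) e + brk n (ψ e e z)) * e := by rw [← h0']
      rw [mul_add, add_mul, X2' (ψ n e z), X6' _ n hew hn] at hh1
      have hh2 : brk n (ψ e e z) = 0 := left_eq_add.mp hh1
      rw [← neg_brk, hh2, neg_zero]
  -- Level 2 : ψ x e z is central
  have L2 : ∀ x z : G, e * x = x * e → e * z = z * e → central (ψ x e z) := by
    intro x z hx hz
    have ha : brk e (ψ x e z) = 0 := by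
      rw [P1 x e z hx]
      exact brk_central_right _ x (L1 z hz)
    have hew : e * ψ x e z = ψ x e z * e := comm_of_brk _ _ ha
    apply Crit _ hew
    · intro m hm
      have h0' := d2 x z e m
      rw [brk_em m hm] at h0'
      have hh1 : e * ψ x m z * v
          = e * (brk (ψ x e z) m + brk e (ψ x m z)) * v := by rw [← h0']
      rw [mul_add, add_mul, X1 (ψ x m z), X5 _ m hew hm] at hh1
      exact right_eq_add.mp hh1
    · intro n hn
      have h0' := d2 x z n e
      rw [brk_ne n hn] at h0'
      have hh1 : v * ψ x n z * e
          = v * (brk (ψ x n z) e + brk n (ψ x e z)) * e := by rw [← h0']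
      rw [mul_add, add_mul, X2' (ψ x n z), X6' _ n hew hn] at hh1
      have hh2 : brk n (ψ x e z) = 0 := left_eq_add.mp hh1
      rw [← neg_brk, hh2, neg_zero]
  -- HP : commuting slot-3 bracket
  have HP : ∀ c g : G, e * c = c * e → ψ e e (brk c g) = brk c (ψ e e g) := by
    intro c g hcg
    have h0 := d3 e e c g
    rw [brk_central_left _ g (L1 c hcg), zero_add] at h0
    exact h0
  -- W1 / W1'
  have W1 : ∀ x g : G, e * x = x * e →
      e * ψ x e g * v = brk x (e * ψ e e g * v) := by
    intro x g hx
    have hh1 : e * brk e (ψ x e g) * v = e * brk x (ψ e e g) * v := by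
      rw [P1 x e g hx]
    rw [X1, X3 x _ hx] at hh1
    exact hh1
  have W1' : ∀ x g : G, e * x = x * e →
      v * ψ x e g * e = -brk x (v * ψ e e g * e) := by
    intro x g hx
    have hh1 : v * brk e (ψ x e g) * e = v * brk x (ψ e e g) * e := by
      rw [P1 x e g hx]
    rw [X2, X4 x _ hx] at hh1
    rw [← hh1, neg_neg]
  -- F3M / F3N
  have F3M : ∀ x y g : G, e * x = x * e → e * y = y * e →
      e * ψ x y g * v = brk y (brk x (e * ψ e e g * v)) := by
    intro x y g hx hy
    have hh1 : e * brk e (ψ x y g) * v = e * brk y (ψ x e g) * v := by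
      rw [P2 x y g hy]
    rw [X1, X3 y _ hy, W1 x g hx] at hh1
    exact hh1
  have F3N : ∀ x y g : G, e * x = x * e → e * y = y * e →
      v * ψ x y g * e = brk y (brk x (v * ψ e e g * e)) := by
    intro x y g hx hy
    have hh1 : v * brk e (ψ x y g) * e = v * brk y (ψ x e g) * e := by
      rw [P2 x y g hy]
    rw [X2, X4 y _ hy, W1' x g hx, brk_neg_right] at hh1
    exact neg_inj.mp hh1
  -- key lemmas K / K'
  have K : ∀ u w g : G, e * u = u * e → e * w = w * e →
      brk (brk u w) (e * ψ e e g * v) = 0 := by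
    intro u w g hu hw
    have step : ψ u e (brk w g) = brk w (ψ u e g) := by
      have h0 := d3 u e w g
      rw [brk_central_left _ g (L2 u w hu hw), zero_add] at h0
      exact h0
    have hh1 : e * ψ u e (brk w g) * v = e * brk w (ψ u e g) * v := by
      rw [step]
    rw [W1 u (brk w g) hu, X3 w _ hw, W1 u g hu] at hh1
    rw [HP w g hw, X3 w _ hw] at hh1
    have hj := jac u w (e * ψ e e g * v)
    rw [hh1, sub_self] at hj
    exact hj.symm
  have K' : ∀ u w g : G, e * u = u * e → e * w = w * e →
      brk (brk u w) (v * ψ e e g * e) = 0 := by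
    intro u w g hu hw
    have step : ψ u e (brk w g) = brk w (ψ u e g) := by
      have h0 := d3 u e w g
      rw [brk_central_left _ g (L2 u w hu hw), zero_add] at h0
      exact h0
    have hh1 : v * ψ u e (brk w g) * e = v * brk w (ψ u e g) * e := by
      rw [step]
    rw [W1' u (brk w g) hu, X4 w _ hw, W1' u g hu, brk_neg_right] at hh1
    rw [HP w g hw, X4 w _ hw] at hh1
    have hh2 := neg_inj.mp hh1
    have hj := jac u w (v * ψ e e g * e)
    rw [hh2, sub_self] at hj
    exact hj.symm
  -- final level
  intro x y z hx hy hz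
  have hcx : e * x = x * e := hcomm x hx
  have hcy : e * y = y * e := hcomm y hy
  have hcz : e * z = z * e := hcomm z hz
  have ha : brk e (ψ x y z) = 0 := by
    rw [P2 x y z hcy]
    exact brk_central_right _ y (L2 x z hcx hcz)
  have hew : e * ψ x y z = ψ x y z * e := comm_of_brk _ _ ha
  apply Crit _ hew
  · intro m hm
    have h0 := d3 x y z m
    have hh1 : e * ψ x y (brk z m) * v
        = e * (brk (ψ x y z) m + brk z (ψ x y m)) * v := by rw [← h0]
    rw [mul_add, add_mul, X5 _ m hew hm, X3 z _ hcz, F3M x y m hcx hcy,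
      F3M x y (brk z m) hcx hcy] at hh1
    rw [HP z m hcz, X3 z _ hcz] at hh1
    have k1 : brk (brk x z) (e * ψ e e m * v) = 0 := K x z m hcx hcz
    have e1 : brk x (brk z (e * ψ e e m * v)) = brk z (brk x (e * ψ e e m * v)) := by
      have hjj := jac x z (e * ψ e e m * v)
      rw [k1] at hjj
      exact sub_eq_zero.mp hjj
    have hxh : brk x (e * ψ e e m * v) = e * ψ e e (brk x m) * v := by
      rw [HP x m hcx, X3 x _ hcx]
    have k2 : brk (brk y z) (brk x (e * ψ e e m * v)) = 0 := by
      rw [hxh]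
      exact K y z (brk x m) hcy hcz
    have e2 : brk y (brk z (brk x (e * ψ e e m * v)))
        = brk z (brk y (brk x (e * ψ e e m * v))) := by
      have hjj := jac y z (brk x (e * ψ e e m * v))
      rw [k2] at hjj
      exact sub_eq_zero.mp hjj
    rw [e1, e2] at hh1
    exact right_eq_add.mp hh1
  · intro n hn
    have h0 := d3 x y z n
    have hh1 : v * ψ x y (brk z n) * e
        = v * (brk (ψ x y z) n + brk z (ψ x y n)) * e := by rw [← h0]
    rw [mul_add, add_mul, X6 _ n hew hn, X4 z _ hcz, F3N x y n hcx hcy,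
      F3N x y (brk z n) hcx hcy] at hh1
    rw [HP z n hcz, X4 z _ hcz] at hh1
    have k1 : brk (brk x z) (v * ψ e e n * e) = 0 := K' x z n hcx hcz
    have e1 : brk x (brk z (v * ψ e e n * e)) = brk z (brk x (v * ψ e e n * e)) := by
      have hjj := jac x z (v * ψ e e n * e)
      rw [k1] at hjj
      exact sub_eq_zero.mp hjj
    have hxj : brk x (v * ψ e e n * e) = v * ψ e e (brk x n) * e := by
      rw [HP x n hcx, X4 x _ hcx]
    have k2 : brk (brk y z) (brk x (v * ψ e e n * e)) = 0 := by
      rw [hxj]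
      exact K' y z (brk x n) hcy hcz
    have e2 : brk y (brk z (brk x (v * ψ e e n * e)))
        = brk z (brk y (brk x (v * ψ e e n * e))) := by
      have hjj := jac y z (brk x (v * ψ e e n * e))
      rw [k2] at hjj
      exact sub_eq_zero.mp hjj
    rw [e1, e2] at hh1
    exact right_eq_add.mp hh1
end

section
/- Let R be a commutative 2-torsionfree ring, let r > 2, let n ≥ 3, and let φ be an n-Lie derivation of the full matrix algebra M_r(R) of r × r matrices over R. Then there exists X0 ∈ M_r(R) with [[u,v],X0] = 0 for all u, v ∈ M_r(R) such that for all x1,…,xn ∈ M_r(R) the element φ(x1,…,xn) - [x1,[x2,…,[xn,X0]…]] lies in the center Z(M_r(R)); that is, φ is the sum of an extremal n-derivation and an n-linear centrally-valued mapping. -/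
section Infra
variable {R : Type*} [CommRing R] {r : ℕ}

def e (i j : Fin r) : Matrix (Fin r) (Fin r) R :=
  Matrix.of fun a b => if a = i ∧ b = j then 1 else 0

@[simp] lemma e_apply (i j a b : Fin r) :
    (e i j : Matrix (Fin r) (Fin r) R) a b = if a = i ∧ b = j then 1 else 0 := rfl

@[simp] lemma mul_e (M : Matrix (Fin r) (Fin r) R) (k l a b : Fin r) :
    (M * e k l : Matrix (Fin r) (Fin r) R) a b = if b = l then M a k else 0 := by
  rw [Matrix.mul_apply]
  by_cases h : b = l
  · simp only [e_apply, h, and_true, mul_ite, mul_one, mul_zero]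
    rw [Finset.sum_ite_eq' Finset.univ k (fun c => M a c)]
    simp
  · simp [e_apply, h]

@[simp] lemma e_mul (M : Matrix (Fin r) (Fin r) R) (k l a b : Fin r) :
    ((e k l : Matrix (Fin r) (Fin r) R) * M) a b = if a = k then M l b else 0 := by
  rw [Matrix.mul_apply]
  by_cases h : a = k
  · simp only [e_apply, h, true_and, ite_mul, one_mul, zero_mul]
    rw [Finset.sum_ite_eq' Finset.univ l (fun c => M c b)]
    simp
  · simp [e_apply, h]

lemma matrix_expand (x : Matrix (Fin r) (Fin r) R) :
    x = ∑ a : Fin r, ∑ b : Fin r, x a b • e a b := by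
  ext i j
  rw [Matrix.sum_apply]
  simp only [Matrix.sum_apply, Matrix.smul_apply, e_apply, smul_eq_mul, mul_ite, mul_one, mul_zero]
  rw [Finset.sum_eq_single i]
  · rw [Finset.sum_eq_single j]
    · simp
    · intro b _ hb; simp [Ne.symm hb]
    · simp
  · intro a _ ha
    apply Finset.sum_eq_zero
    intro c _
    simp [Ne.symm ha]
  · simp

lemma central_smul_one (c : R) : central (c • (1 : Matrix (Fin r) (Fin r) R)) := by
  intro g
  rw [Matrix.smul_mul, Matrix.mul_smul, one_mul, mul_one]

lemma central_zero : central (0 : Matrix (Fin r) (Fin r) R) := by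
  intro g; simp

lemma central_offdiag {C : Matrix (Fin r) (Fin r) R} (hC : central C) {a b : Fin r}
    (hab : a ≠ b) : C a b = 0 := by
  have h := congrFun (congrFun (hC (e b b)) a) b
  simpa [hab] using h

lemma central_of_entries (hr : 0 < r) (S : Matrix (Fin r) (Fin r) R)
    (hoff : ∀ a b, a ≠ b → S a b = 0)
    (hdiag : ∀ a b, S a a = S b b) : central S := by
  have hS : S = S ⟨0, hr⟩ ⟨0, hr⟩ • (1 : Matrix (Fin r) (Fin r) R) := by
    ext a b
    by_cases hab : a = b
    · subst hab; simp [Matrix.one_apply, hdiag a ⟨0, hr⟩]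
    · simp [hoff a b hab, Matrix.one_apply, hab]
  rw [hS]; exact central_smul_one _

lemma central_sum {ι : Type*} (s : Finset ι) (f : ι → Matrix (Fin r) (Fin r) R)
    (h : ∀ i ∈ s, central (f i)) : central (∑ i ∈ s, f i) := by
  intro g
  rw [Finset.sum_mul, Finset.mul_sum]
  exact Finset.sum_congr rfl fun i hi => h i hi g

lemma central_smul (c : R) {S : Matrix (Fin r) (Fin r) R} (h : central S) : central (c • S) := by
  intro g
  rw [Matrix.smul_mul, Matrix.mul_smul, h g]

lemma exists_third (hr : 2 < r) (i j : Fin r) : ∃ k : Fin r, k ≠ i ∧ k ≠ j := by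
  by_contra h
  push_neg at h
  have hsub : (Finset.univ : Finset (Fin r)) ⊆ {i, j} := fun k _ => by
    rcases eq_or_ne k i with h1 | h1
    · simp [h1]
    · simp [h k h1]
  have hc := Finset.card_le_card hsub
  simp only [Finset.card_univ, Fintype.card_fin] at hc
  have : ({i, j} : Finset (Fin r)).card ≤ 2 := Finset.card_le_two
  omega

lemma e_mul_e (i j k l : Fin r) :
    (e i j * e k l : Matrix (Fin r) (Fin r) R) = if j = k then e i l else 0 := by
  ext a b
  by_cases hjk : j = k
  · subst hjk
    by_cases h1 : a = i <;> by_cases h2 : b = l <;> simp [e_apply, h1, h2]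
  · simp only [mul_e, e_apply, if_neg hjk, Matrix.zero_apply]
    by_cases h2 : b = l <;> by_cases h1 : a = i <;> simp [h1, h2, hjk, (Ne.symm hjk : k ≠ j)]
end Infra

section SL
variable {R : Type*} [CommRing R] {r : ℕ}
  {ψ : Matrix (Fin r) (Fin r) R → Matrix (Fin r) (Fin r) R → Matrix (Fin r) (Fin r) R → Matrix (Fin r) (Fin r) R}
  (hψ : IsLieDer3 R ψ)

include hψ

lemma psi_zero1 (v w : Matrix (Fin r) (Fin r) R) : ψ 0 v w = 0 := (hψ.1 v w).map_zero

lemma comm1 {p q : Fin r} (hpq : p ≠ q) (v w : Matrix (Fin r) (Fin r) R) :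
    brk (ψ (e p p) v w) (e q q) + brk (e p p) (ψ (e q q) v w) = 0 := by
  have h := hψ.2.2.2.1 v w (e p p) (e q q)
  have hb : brk (e p p) (e q q) = (0 : Matrix (Fin r) (Fin r) R) := by
    simp [brk, e_mul_e, hpq, Ne.symm hpq]
  rw [hb, psi_zero1 hψ] at h
  exact h.symm

lemma alphainst {p q : Fin r} (hpq : p ≠ q) (v w : Matrix (Fin r) (Fin r) R) :
    ψ (e p q) v w = brk (ψ (e p p) v w) (e p q) + brk (e p p) (ψ (e p q) v w) := by
  have hb : brk (e p p) (e p q) = (e p q : Matrix (Fin r) (Fin r) R) := by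
    simp [brk, e_mul_e, Ne.symm hpq]
  have h := hψ.2.2.2.1 v w (e p p) (e p q)
  rw [hb] at h
  exact h

lemma betainst {p q : Fin r} (hpq : p ≠ q) (v w : Matrix (Fin r) (Fin r) R) :
    ψ (e p q) v w = brk (ψ (e p q) v w) (e q q) + brk (e p q) (ψ (e q q) v w) := by
  have hb : brk (e p q) (e q q) = (e p q : Matrix (Fin r) (Fin r) R) := by
    simp [brk, e_mul_e, Ne.symm hpq]
  have h := hψ.2.2.2.1 v w (e p q) (e q q)
  rw [hb] at h
  exact h

/-- S1: off-diagonal entries of `ψ(e_pp,v,w)` away from row/col `p` vanish. -/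
lemma S1 {p a b : Fin r} (hap : a ≠ p) (hbp : b ≠ p) (hab : a ≠ b)
    (v w : Matrix (Fin r) (Fin r) R) : ψ (e p p) v w a b = 0 := by
  have h := congrFun (congrFun (comm1 hψ (Ne.symm hap) v w) a) b
  simp only [Matrix.add_apply, brk, Matrix.sub_apply, mul_e, e_mul, Matrix.zero_apply] at h
  simp only [Ne.symm hab, hap, hbp, if_false, if_true, ite_true, ite_false] at h
  linear_combination -h

/-- S2: the diagonal of `ψ(e_pp,v,w)` is constant. -/
lemma S2 {p q : Fin r} (hpq : p ≠ q) (v w : Matrix (Fin r) (Fin r) R) :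
    ψ (e p p) v w p p = ψ (e p p) v w q q := by
  have h := congrFun (congrFun (alphainst hψ hpq v w) p) q
  simp only [brk, Matrix.add_apply, Matrix.sub_apply, mul_e, e_mul] at h
  simp only [Ne.symm hpq, hpq, if_false, ite_true, ite_false, if_true] at h
  linear_combination -h

/-- S3row: `ψ(e_pp,v,w)[p,b] = -ψ(e_bb,v,w)[p,b]`. -/
lemma S3row {p b : Fin r} (hbp : b ≠ p) (v w : Matrix (Fin r) (Fin r) R) :
    ψ (e p p) v w p b = - ψ (e b b) v w p b := by
  have h := congrFun (congrFun (comm1 hψ (Ne.symm hbp) v w) p) b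
  simp only [Matrix.add_apply, brk, Matrix.sub_apply, mul_e, e_mul, Matrix.zero_apply] at h
  simp only [Ne.symm hbp, hbp, if_false, ite_true, ite_false, if_true] at h
  linear_combination h

/-- S3col: `ψ(e_pp,v,w)[a,p] = -ψ(e_aa,v,w)[a,p]`. -/
lemma S3col {p a : Fin r} (hap : a ≠ p) (v w : Matrix (Fin r) (Fin r) R) :
    ψ (e p p) v w a p = - ψ (e a a) v w a p := by
  have h := congrFun (congrFun (comm1 hψ (Ne.symm hap) v w) a) p
  simp only [Matrix.add_apply, brk, Matrix.sub_apply, mul_e, e_mul, Matrix.zero_apply] at h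
  simp only [Ne.symm hap, hap, if_false, ite_true, ite_false, if_true] at h
  linear_combination -h

/-- S4a. -/
lemma S4a {p q a b : Fin r} (hpq : p ≠ q) (hap : a ≠ p) (hbp : b ≠ p) (hbq : b ≠ q)
    (v w : Matrix (Fin r) (Fin r) R) : ψ (e p q) v w a b = 0 := by
  have h := congrFun (congrFun (alphainst hψ hpq v w) a) b
  simp only [brk, Matrix.add_apply, Matrix.sub_apply, mul_e, e_mul] at h
  simp only [hap, hbp, hbq, if_false, ite_true, ite_false, if_true] at h
  linear_combination h

/-- S4b: column `p` of `ψ(e_pq,v,w)` vanishes off row `p` (uses 2-torsionfreeness). -/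
lemma S4b (htf : ∀ x : R, x + x = 0 → x = 0) {p q a : Fin r} (hpq : p ≠ q) (hap : a ≠ p)
    (v w : Matrix (Fin r) (Fin r) R) : ψ (e p q) v w a p = 0 := by
  have h := congrFun (congrFun (alphainst hψ hpq v w) a) p
  simp only [brk, Matrix.add_apply, Matrix.sub_apply, mul_e, e_mul] at h
  simp only [Ne.symm hpq, hpq, hap, if_false, ite_true, ite_false, if_true] at h
  apply htf
  linear_combination h

/-- S5. -/
lemma S5 {p q a : Fin r} (hpq : p ≠ q) (hap : a ≠ p) (v w : Matrix (Fin r) (Fin r) R) :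
    ψ (e p q) v w a q = ψ (e p p) v w a p := by
  have h := congrFun (congrFun (alphainst hψ hpq v w) a) q
  simp only [brk, Matrix.add_apply, Matrix.sub_apply, mul_e, e_mul] at h
  simp only [Ne.symm hpq, hpq, hap, if_false, ite_true, ite_false, if_true] at h
  linear_combination h

/-- S6: (p,p) entry. -/
lemma S6 {p q : Fin r} (hpq : p ≠ q) (v w : Matrix (Fin r) (Fin r) R) :
    ψ (e p q) v w p p = - ψ (e p p) v w q p := by
  have h := congrFun (congrFun (alphainst hψ hpq v w) p) p
  simp only [brk, Matrix.add_apply, Matrix.sub_apply, mul_e, e_mul] at h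
  simp only [Ne.symm hpq, hpq, if_false, ite_true, ite_false, if_true] at h
  linear_combination h

/-- S7: row `p` entries off column `q`. -/
lemma S7 {p q b : Fin r} (hpq : p ≠ q) (hbq : b ≠ q) (v w : Matrix (Fin r) (Fin r) R) :
    ψ (e p q) v w p b = ψ (e q q) v w q b := by
  have h := congrFun (congrFun (betainst hψ hpq v w) p) b
  simp only [brk, Matrix.add_apply, Matrix.sub_apply, mul_e, e_mul] at h
  simp only [Ne.symm hpq, hpq, hbq, if_false, ite_true, ite_false, if_true] at h
  linear_combination h

/-- S8: (q,q) entry. -/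
lemma S8 {p q : Fin r} (hpq : p ≠ q) (v w : Matrix (Fin r) (Fin r) R) :
    ψ (e p q) v w q q = - ψ (e q q) v w q p := by
  have h := congrFun (congrFun (betainst hψ hpq v w) q) q
  simp only [brk, Matrix.add_apply, Matrix.sub_apply, mul_e, e_mul] at h
  simp only [Ne.symm hpq, hpq, if_false, ite_true, ite_false, if_true] at h
  linear_combination h

end SL

section Kill
open Matrix
variable {R : Type*} [CommRing R] {r : ℕ}

lemma brk_zero_left (x : Matrix (Fin r) (Fin r) R) : brk 0 x = 0 := by simp [brk]
lemma brk_zero_right (x : Matrix (Fin r) (Fin r) R) : brk x 0 = 0 := by simp [brk]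

variable {d : Matrix (Fin r) (Fin r) R → Matrix (Fin r) (Fin r) R}

lemma d_sub (hdlin : IsLinearMap R d) (x y : Matrix (Fin r) (Fin r) R) :
    d (x - y) = d x - d y := by
  have := (IsLinearMap.mk' d hdlin).map_sub x y
  simpa using this

lemma d_expand (hdlin : IsLinearMap R d) (z : Matrix (Fin r) (Fin r) R) :
    d z = ∑ a : Fin r, ∑ b : Fin r, z a b • d (e a b) := by
  conv_lhs => rw [matrix_expand z]
  show (IsLinearMap.mk' d hdlin) _ = _
  rw [map_sum]
  refine Finset.sum_congr rfl fun a _ => ?_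
  rw [map_sum]
  refine Finset.sum_congr rfl fun b _ => ?_
  rw [LinearMap.map_smul]
  rfl

lemma kill_row (htf : ∀ x : R, x + x = 0 → x = 0) (hr : 2 < r)
    (hdlin : IsLinearMap R d)
    (hd : ∀ u v, d (brk u v) = brk (d u) v + brk u (d v)) {p : Fin r}
    (hsupp : ∀ z a b, a ≠ p → d z a b = 0) (hdiagp : ∀ z, d z p p = 0) :
    ∀ z, d z = 0 := by
  obtain ⟨m0, hm0p, -⟩ := exists_third hr p p
  have hbrk1 : ∀ m : Fin r, m ≠ p → brk (e m p) (e p p) = (e m p : Matrix (Fin r) (Fin r) R) := by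
    intro m hmp
    simp [brk, e_mul_e, (Ne.symm hmp : p ≠ m)]
  -- row facts for d (e p p)
  have hYrow : ∀ b, d (e p p) p b = 0 := by
    intro b
    have heq := hd (e m0 p) (e p p)
    rw [hbrk1 m0 hm0p] at heq
    have h := congrFun (congrFun heq m0) b
    simp only [brk, Matrix.add_apply, Matrix.sub_apply, mul_e, e_mul] at h
    simp only [show ∀ z b', d z m0 b' = 0 from fun z b' => hsupp z m0 b' hm0p,
      hm0p, if_false, ite_true, ite_false, if_true, ite_self] at h
    linear_combination -h
  have hY : d (e p p) = 0 := by
    ext a b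
    rcases eq_or_ne a p with rfl | hap
    · simpa using hYrow b
    · simpa using hsupp _ _ _ hap
  have hXmprow : ∀ m, m ≠ p → ∀ b, d (e m p) p b = 0 := by
    intro m hmp b
    have heq := hd (e m p) (e p p)
    rw [hbrk1 m hmp, hY, brk_zero_right, add_zero] at heq
    have h := congrFun (congrFun heq p) b
    simp only [brk, Matrix.sub_apply, mul_e, e_mul, ite_true, if_true] at h
    simp only [hdiagp, ite_self] at h
    apply htf
    linear_combination h
  have hXmp : ∀ m, m ≠ p → d (e m p) = 0 := by
    intro m hmp
    ext a b
    rcases eq_or_ne a p with rfl | hap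
    · simpa using hXmprow m hmp b
    · simpa using hsupp _ _ _ hap
  have hbrk2 : ∀ n : Fin r, brk (e n p) (e p n) =
      (e n n - e p p : Matrix (Fin r) (Fin r) R) := by
    intro n; simp [brk, e_mul_e]
  have hXpnrow : ∀ n, n ≠ p → ∀ b, d (e p n) p b = 0 := by
    intro n hnp b
    have heq := hd (e n p) (e p n)
    rw [hbrk2 n, d_sub hdlin, hY, hXmp n hnp, brk_zero_left, zero_add, sub_zero] at heq
    have h := congrFun (congrFun heq n) b
    simp only [brk, Matrix.sub_apply, mul_e, e_mul, ite_true, if_true] at h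
    simp only [show ∀ z b', d z n b' = 0 from fun z b' => hsupp z n b' hnp, ite_self] at h
    linear_combination -h
  have hXpn : ∀ n, n ≠ p → d (e p n) = 0 := by
    intro n hnp
    ext a b
    rcases eq_or_ne a p with rfl | hap
    · simpa using hXpnrow n hnp b
    · simpa using hsupp _ _ _ hap
  have hXnn : ∀ n, n ≠ p → d (e n n) = 0 := by
    intro n hnp
    have heq := hd (e n p) (e p n)
    rw [hbrk2 n, d_sub hdlin, hY, hXmp n hnp, hXpn n hnp, brk_zero_left, brk_zero_right,
      zero_add, sub_zero] at heq
    exact heq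
  have hXmnrow : ∀ m n, m ≠ p → n ≠ p → m ≠ n → ∀ b, d (e m n) p b = 0 := by
    intro m n hmp hnp hmn b
    have hbrk3 : brk (e m n) (e n n) = (e m n : Matrix (Fin r) (Fin r) R) := by
      simp [brk, e_mul_e, (Ne.symm hmn : n ≠ m)]
    have hbrk4 : brk (e m m) (e m n) = (e m n : Matrix (Fin r) (Fin r) R) := by
      simp [brk, e_mul_e, (Ne.symm hmn : n ≠ m)]
    have heq1 := hd (e m n) (e n n)
    rw [hbrk3, hXnn n hnp, brk_zero_right, add_zero] at heq1
    have heq2 := hd (e m m) (e m n)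
    rw [hbrk4, hXnn m hmp, brk_zero_left, zero_add] at heq2
    rcases eq_or_ne b n with hbn | hbn
    · rw [hbn]
      have h := congrFun (congrFun heq2 p) n
      simp only [brk, Matrix.sub_apply, mul_e, e_mul] at h
      simp only [(Ne.symm hmp : p ≠ m), (Ne.symm hmn : n ≠ m), if_false, ite_false] at h
      simpa using h
    · have h := congrFun (congrFun heq1 p) b
      simp only [brk, Matrix.sub_apply, mul_e, e_mul] at h
      simp only [hbn, (Ne.symm hnp : p ≠ n), if_false, ite_false] at h
      simpa using h
  have hXmn : ∀ m n, m ≠ p → n ≠ p → m ≠ n → d (e m n) = 0 := by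
    intro m n hmp hnp hmn
    ext a b
    rcases eq_or_ne a p with rfl | hap
    · simpa using hXmnrow m n hmp hnp hmn b
    · simpa using hsupp _ _ _ hap
  intro z
  rw [d_expand hdlin z]
  apply Finset.sum_eq_zero; intro a _
  apply Finset.sum_eq_zero; intro b _
  rcases eq_or_ne a p with rfl | hap
  · rcases eq_or_ne b a with rfl | hbp
    · rw [hY, smul_zero]
    · rw [hXpn b hbp, smul_zero]
  · rcases eq_or_ne a b with rfl | hab
    · rw [hXnn a hap, smul_zero]
    · rcases eq_or_ne b p with rfl | hbp
      · rw [hXmp a hap, smul_zero]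
      · rw [hXmn a b hap hbp hab, smul_zero]



lemma brk_transpose (u v : Matrix (Fin r) (Fin r) R) :
    (brk u v)ᵀ = - brk uᵀ vᵀ := by
  simp only [brk, Matrix.transpose_sub, Matrix.transpose_mul]
  abel

lemma brk_smul_left (c : R) (x y : Matrix (Fin r) (Fin r) R) :
    brk (c • x) y = c • brk x y := by
  simp [brk, Matrix.smul_mul, Matrix.mul_smul, smul_sub]

lemma kill_col (htf : ∀ x : R, x + x = 0 → x = 0) (hr : 2 < r)
    (hdlin : IsLinearMap R d)
    (hd : ∀ u v, d (brk u v) = brk (d u) v + brk u (d v)) {p : Fin r}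
    (hsupp : ∀ z a b, b ≠ p → d z a b = 0) (hdiagp : ∀ z, d z p p = 0) :
    ∀ z, d z = 0 := by
  set d' : Matrix (Fin r) (Fin r) R → Matrix (Fin r) (Fin r) R := fun z => (d zᵀ)ᵀ with hd'def
  have hdlin' : IsLinearMap R d' := by
    constructor
    · intro x y
      simp only [hd'def, Matrix.transpose_add, hdlin.map_add]
    · intro c x
      simp only [hd'def, Matrix.transpose_smul, hdlin.map_smul]
  have hd'd : ∀ u v, d' (brk u v) = brk (d' u) v + brk u (d' v) := by
    intro u v
    have h1 : (brk u v)ᵀ = - brk uᵀ vᵀ := brk_transpose u v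
    calc d' (brk u v) = (d (- brk uᵀ vᵀ))ᵀ := by rw [hd'def]; simp [h1]
    _ = (- d (brk uᵀ vᵀ))ᵀ := by rw [hdlin.map_neg]
    _ = (- (brk (d uᵀ) vᵀ + brk uᵀ (d vᵀ)))ᵀ := by rw [hd uᵀ vᵀ]
    _ = - ((brk (d uᵀ) vᵀ)ᵀ + (brk uᵀ (d vᵀ))ᵀ) := by
          rw [Matrix.transpose_neg, Matrix.transpose_add]
    _ = - (- brk (d uᵀ)ᵀ vᵀᵀ + - brk uᵀᵀ (d vᵀ)ᵀ) := by rw [brk_transpose, brk_transpose]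
    _ = brk (d' u) v + brk u (d' v) := by
          rw [Matrix.transpose_transpose, Matrix.transpose_transpose]
          show _ = brk (d uᵀ)ᵀ v + brk u (d vᵀ)ᵀ
          abel
  have hsupp' : ∀ z a b, a ≠ p → d' z a b = 0 := by
    intro z a b hap
    show (d zᵀ)ᵀ a b = 0
    rw [Matrix.transpose_apply]
    exact hsupp zᵀ b a hap
  have hdiagp' : ∀ z, d' z p p = 0 := by
    intro z
    show (d zᵀ)ᵀ p p = 0
    rw [Matrix.transpose_apply]
    exact hdiagp zᵀ
  have hz := kill_row htf hr hdlin' hd'd hsupp' hdiagp'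
  intro z
  have h := hz zᵀ
  have : (d z)ᵀ = 0 := by
    have : d' zᵀ = (d z)ᵀ := by rw [hd'def]; simp
    rw [← this, h]
  calc d z = ((d z)ᵀ)ᵀ := by rw [Matrix.transpose_transpose]
  _ = 0 := by rw [this]; simp
lemma kill1 (htf : ∀ x : R, x + x = 0 → x = 0) (hr : 2 < r)
    (hdlin : IsLinearMap R d)
    (hd : ∀ u v, d (brk u v) = brk (d u) v + brk u (d v)) {p s : Fin r} (hps : p ≠ s)
    (hoff : ∀ z a b, a ≠ b → ¬(a = p ∧ b = s) → ¬(a = s ∧ b = p) → d z a b = 0)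
    (hdiag : ∀ z a b, d z a a = d z b b) :
    ∀ z a b, a ≠ b → d z a b = 0 := by
  obtain ⟨m, hmp, hms⟩ := exists_third hr p s
  -- Stage 1 : units e a b with b ∉ {p,s}, a ≠ b are killed entirely
  have St1 : ∀ a b : Fin r, b ≠ p → b ≠ s → a ≠ b → d (e a b) = 0 := by
    intro a b hbp hbs hab
    have hbrk : brk (e a b) (e b b) = (e a b : Matrix (Fin r) (Fin r) R) := by
      simp [brk, e_mul_e, (Ne.symm hab : b ≠ a)]
    have heq := hd (e a b) (e b b)
    rw [hbrk] at heq
    have hYbs : d (e b b) b s = 0 :=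
      hoff _ b s hbs (fun hh => hbp hh.1) (fun hh => hbs hh.1)
    have hYbp : d (e b b) b p = 0 :=
      hoff _ b p hbp (fun hh => hbp hh.1) (fun hh => hbs hh.1)
    have hYba : d (e b b) b a = 0 :=
      hoff _ b a (Ne.symm hab) (fun hh => hbp hh.1) (fun hh => hbs hh.1)
    have h1 : d (e a b) p s = 0 := by
      have h := congrFun (congrFun heq p) s
      simp only [brk, Matrix.add_apply, Matrix.sub_apply, mul_e, e_mul] at h
      simp only [(Ne.symm hbs : s ≠ b), (Ne.symm hbp : p ≠ b), if_false, ite_false,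
        hYbs, ite_self] at h
      linear_combination h
    have h2 : d (e a b) s p = 0 := by
      have h := congrFun (congrFun heq s) p
      simp only [brk, Matrix.add_apply, Matrix.sub_apply, mul_e, e_mul] at h
      simp only [(Ne.symm hbp : p ≠ b), (Ne.symm hbs : s ≠ b), if_false, ite_false,
        hYbp, ite_self] at h
      linear_combination h
    have h3 : d (e a b) b b = 0 := by
      have h := congrFun (congrFun heq b) b
      simp only [brk, Matrix.add_apply, Matrix.sub_apply, mul_e, e_mul] at h
      simp only [(Ne.symm hab : b ≠ a), if_false, ite_false, ite_true, if_true, hYba] at h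
      linear_combination h
    ext a' b'
    rcases eq_or_ne a' b' with rfl | hab'
    · simp only [Matrix.zero_apply]
      rw [hdiag _ a' b, h3]
    · by_cases hc1 : a' = p ∧ b' = s
      · obtain ⟨rfl, rfl⟩ := hc1; simpa using h1
      · by_cases hc2 : a' = s ∧ b' = p
        · obtain ⟨rfl, rfl⟩ := hc2; simpa using h2
        · simpa using hoff _ a' b' hab' hc1 hc2
  -- Stage 2 : e a p with a ∉ {p,s}
  have St2 : ∀ a : Fin r, a ≠ p → a ≠ s → d (e a p) = 0 := by
    intro a hap has
    have hbrk : brk (e a a) (e a p) = (e a p : Matrix (Fin r) (Fin r) R) := by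
      simp [brk, e_mul_e, (Ne.symm hap : p ≠ a)]
    have heq := hd (e a a) (e a p)
    rw [hbrk] at heq
    have hYsa : d (e a a) s a = 0 :=
      hoff _ s a (Ne.symm has) (fun hh => hps hh.1.symm) (fun hh => hap hh.2)
    have hsa : s ≠ a := fun hh => has hh.symm
    have hpa : p ≠ a := Ne.symm hap
    have h1 : d (e a p) p s = 0 := by
      have h := congrFun (congrFun heq p) s
      simp only [brk, Matrix.add_apply, Matrix.sub_apply, mul_e, e_mul] at h
      simp only [(Ne.symm hps : s ≠ p), hps, hpa, hsa, if_false, ite_false] at h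
      linear_combination h
    have h2 : d (e a p) s p = 0 := by
      have h := congrFun (congrFun heq s) p
      simp only [brk, Matrix.add_apply, Matrix.sub_apply, mul_e, e_mul] at h
      simp only [hsa, hpa, if_false, ite_false, ite_true, if_true, hYsa] at h
      linear_combination h
    have h3 : d (e a p) s s = 0 := by
      have h := congrFun (congrFun heq s) s
      simp only [brk, Matrix.add_apply, Matrix.sub_apply, mul_e, e_mul] at h
      simp only [(Ne.symm hps : s ≠ p), hsa, if_false, ite_false] at h
      linear_combination h
    ext a' b'
    rcases eq_or_ne a' b' with rfl | hab'
    · simp only [Matrix.zero_apply]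
      rw [hdiag _ a' s, h3]
    · by_cases hc1 : a' = p ∧ b' = s
      · obtain ⟨rfl, rfl⟩ := hc1; simpa using h1
      · by_cases hc2 : a' = s ∧ b' = p
        · obtain ⟨rfl, rfl⟩ := hc2; simpa using h2
        · simpa using hoff _ a' b' hab' hc1 hc2
  -- Stage 2' : e a s with a ∉ {p,s}
  have St2' : ∀ a : Fin r, a ≠ p → a ≠ s → d (e a s) = 0 := by
    intro a hap has
    have hbrk : brk (e a a) (e a s) = (e a s : Matrix (Fin r) (Fin r) R) := by
      simp [brk, e_mul_e, (Ne.symm has : s ≠ a)]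
    have heq := hd (e a a) (e a s)
    rw [hbrk] at heq
    have hYpa : d (e a a) p a = 0 :=
      hoff _ p a (Ne.symm hap) (fun hh => has hh.2) (fun hh => hps hh.1)
    have hsa : s ≠ a := fun hh => has hh.symm
    have hpa : p ≠ a := fun hh => hap hh.symm
    have h1 : d (e a s) p s = 0 := by
      have h := congrFun (congrFun heq p) s
      simp only [brk, Matrix.add_apply, Matrix.sub_apply, mul_e, e_mul] at h
      simp only [hpa, hsa, if_false, ite_false, ite_true, if_true, hYpa] at h
      linear_combination h
    have h2 : d (e a s) s p = 0 := by
      have h := congrFun (congrFun heq s) p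
      simp only [brk, Matrix.add_apply, Matrix.sub_apply, mul_e, e_mul] at h
      simp only [hps, hsa, hpa, if_false, ite_false] at h
      linear_combination h
    have h3 : d (e a s) p p = 0 := by
      have h := congrFun (congrFun heq p) p
      simp only [brk, Matrix.add_apply, Matrix.sub_apply, mul_e, e_mul] at h
      simp only [hps, hpa, if_false, ite_false] at h
      linear_combination h
    ext a' b'
    rcases eq_or_ne a' b' with rfl | hab'
    · simp only [Matrix.zero_apply]
      rw [hdiag _ a' p, h3]
    · by_cases hc1 : a' = p ∧ b' = s
      · obtain ⟨rfl, rfl⟩ := hc1; simpa using h1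
      · by_cases hc2 : a' = s ∧ b' = p
        · obtain ⟨rfl, rfl⟩ := hc2; simpa using h2
        · simpa using hoff _ a' b' hab' hc1 hc2
  -- Stage 3 : e s p and e p s
  have St3 : d (e s p) = 0 := by
    have hbrk : brk (e s m) (e m p) = (e s p : Matrix (Fin r) (Fin r) R) := by
      simp [brk, e_mul_e, hps, (Ne.symm hps : s ≠ p)]
    have heq := hd (e s m) (e m p)
    rw [hbrk, St1 s m hmp hms (Ne.symm hms), St2 m hmp hms, brk_zero_left, brk_zero_right,
      add_zero] at heq
    exact heq
  have St3' : d (e p s) = 0 := by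
    have hbrk : brk (e p m) (e m s) = (e p s : Matrix (Fin r) (Fin r) R) := by
      simp [brk, e_mul_e, hps, (Ne.symm hps : s ≠ p)]
    have heq := hd (e p m) (e m s)
    rw [hbrk, St1 p m hmp hms (Ne.symm hmp), St2' m hmp hms, brk_zero_left, brk_zero_right,
      add_zero] at heq
    exact heq
  -- Stage 4 : entries of d (e p p)
  have St4ps : d (e p p) p s = 0 := by
    have hbrk : brk (e s p) (e p p) = (e s p : Matrix (Fin r) (Fin r) R) := by
      simp [brk, e_mul_e, hps, (Ne.symm hps : s ≠ p)]
    have heq := hd (e s p) (e p p)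
    rw [hbrk, St3, brk_zero_left, zero_add] at heq
    have h := congrFun (congrFun heq.symm s) s
    simp only [brk, Matrix.sub_apply, mul_e, e_mul, Matrix.zero_apply] at h
    simp only [(Ne.symm hps : s ≠ p), if_false, ite_false, ite_true, if_true] at h
    linear_combination h
  have St4sp : d (e p p) s p = 0 := by
    have hbrk : brk (e p s) (e p p) = (-(e p s) : Matrix (Fin r) (Fin r) R) := by
      simp [brk, e_mul_e, hps, (Ne.symm hps : s ≠ p)]
    have heq := hd (e p s) (e p p)
    rw [hbrk, hdlin.map_neg, St3', neg_zero, brk_zero_left, zero_add] at heq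
    have h := congrFun (congrFun heq.symm p) p
    simp only [brk, Matrix.sub_apply, mul_e, e_mul, Matrix.zero_apply] at h
    simp only [hps, if_false, ite_false, ite_true, if_true] at h
    linear_combination h
  -- Stage 5 : entries of d (e s s)
  have St5sp : d (e s s) s p = 0 := by
    have hbrk : brk (e p s) (e s s) = (e p s : Matrix (Fin r) (Fin r) R) := by
      simp [brk, e_mul_e, hps, (Ne.symm hps : s ≠ p)]
    have heq := hd (e p s) (e s s)
    rw [hbrk, St3', brk_zero_left, zero_add] at heq
    have h := congrFun (congrFun heq.symm p) p
    simp only [brk, Matrix.sub_apply, mul_e, e_mul, Matrix.zero_apply] at h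
    simp only [hps, if_false, ite_false, ite_true, if_true] at h
    linear_combination h
  have St5ps : d (e s s) p s = 0 := by
    have hbrk : brk (e s p) (e s s) = (-(e s p) : Matrix (Fin r) (Fin r) R) := by
      simp [brk, e_mul_e, hps, (Ne.symm hps : s ≠ p)]
    have heq := hd (e s p) (e s s)
    rw [hbrk, hdlin.map_neg, St3, neg_zero, brk_zero_left, zero_add] at heq
    have h := congrFun (congrFun heq.symm s) s
    simp only [brk, Matrix.sub_apply, mul_e, e_mul, Matrix.zero_apply] at h
    simp only [(Ne.symm hps : s ≠ p), if_false, ite_false, ite_true, if_true] at h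
    linear_combination h
  -- Stage 6 : diagonal units e m' m', m' ∉ {p,s}
  have St6 : ∀ m', m' ≠ p → m' ≠ s → d (e m' m') = d (e s s) := by
    intro m' hm'p hm's
    have hbrk : brk (e m' s) (e s m') =
        (e m' m' - e s s : Matrix (Fin r) (Fin r) R) := by
      simp [brk, e_mul_e]
    have heq := hd (e m' s) (e s m')
    rw [hbrk, d_sub hdlin, St2' m' hm'p hm's, St1 s m' hm'p hm's (Ne.symm hm's),
      brk_zero_left, brk_zero_right, add_zero] at heq
    simpa [sub_eq_zero] using heq
  -- collect (p,s) and (s,p) entries of all units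
  have hps0 : ∀ c d', d (e c d') p s = 0 := by
    intro c d'
    rcases eq_or_ne c d' with rfl | hcd
    · rcases eq_or_ne c p with rfl | hcp
      · exact St4ps
      · rcases eq_or_ne c s with rfl | hcs
        · exact St5ps
        · rw [St6 c hcp hcs]; exact St5ps
    · rcases eq_or_ne d' p with rfl | hdp
      · rcases eq_or_ne c s with rfl | hcs
        · rw [St3]; simp
        · rw [St2 c hcd hcs]; simp
      · rcases eq_or_ne d' s with rfl | hds
        · rcases eq_or_ne c p with rfl | hcp
          · rw [St3']; simp
          · rw [St2' c hcp hcd]; simp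
        · rw [St1 c d' hdp hds hcd]; simp
  have hsp0 : ∀ c d', d (e c d') s p = 0 := by
    intro c d'
    rcases eq_or_ne c d' with rfl | hcd
    · rcases eq_or_ne c p with rfl | hcp
      · exact St4sp
      · rcases eq_or_ne c s with rfl | hcs
        · exact St5sp
        · rw [St6 c hcp hcs]; exact St5sp
    · rcases eq_or_ne d' p with rfl | hdp
      · rcases eq_or_ne c s with rfl | hcs
        · rw [St3]; simp
        · rw [St2 c hcd hcs]; simp
      · rcases eq_or_ne d' s with rfl | hds
        · rcases eq_or_ne c p with rfl | hcp
          · rw [St3']; simp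
          · rw [St2' c hcp hcd]; simp
        · rw [St1 c d' hdp hds hcd]; simp
  intro z a b hab
  by_cases hc1 : a = p ∧ b = s
  · obtain ⟨rfl, rfl⟩ := hc1
    rw [d_expand hdlin z, Matrix.sum_apply]
    apply Finset.sum_eq_zero; intro c _
    rw [Matrix.sum_apply]
    apply Finset.sum_eq_zero; intro d' _
    simp [hps0 c d']
  · by_cases hc2 : a = s ∧ b = p
    · obtain ⟨rfl, rfl⟩ := hc2
      rw [d_expand hdlin z, Matrix.sum_apply]
      apply Finset.sum_eq_zero; intro c _
      rw [Matrix.sum_apply]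
      apply Finset.sum_eq_zero; intro d' _
      simp [hsp0 c d']
    · exact hoff _ a b hab hc1 hc2

lemma brk_add_left (x y z : Matrix (Fin r) (Fin r) R) :
    brk (x + y) z = brk x z + brk y z := by
  simp only [brk, add_mul, mul_add]
  abel

lemma brk_smul_right (c : R) (x y : Matrix (Fin r) (Fin r) R) :
    brk x (c • y) = c • brk x y := by
  simp [brk, Matrix.smul_mul, Matrix.mul_smul, smul_sub]

lemma kill3 (htf : ∀ x : R, x + x = 0 → x = 0)
    (hdlin : IsLinearMap R d)
    (hd : ∀ u v, d (brk u v) = brk (d u) v + brk u (d v)) {p s t : Fin r}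
    (hps : p ≠ s) (hpt : p ≠ t) (hst : s ≠ t)
    (hsupp : ∀ z a b, ¬(a = p ∧ b = t) → ¬(a = s ∧ b = p) → d z a b = 0) :
    ∀ z, d z = 0 := by
  have hsp : s ≠ p := Ne.symm hps
  have htp : t ≠ p := Ne.symm hpt
  have hts : t ≠ s := Ne.symm hst
  have formd : ∀ z, d z = (d z p t) • e p t + (d z s p) • e s p := by
    intro z
    ext a b
    simp only [Matrix.add_apply, Matrix.smul_apply, e_apply, smul_eq_mul, mul_ite,
      mul_one, mul_zero]
    by_cases hc1 : a = p ∧ b = t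
    · obtain ⟨rfl, rfl⟩ := hc1
      simp [hps]
    · by_cases hc2 : a = s ∧ b = p
      · obtain ⟨rfl, rfl⟩ := hc2
        simp [hsp, htp]
      · rw [hsupp z a b hc1 hc2]
        simp only [if_neg hc1, if_neg hc2, add_zero]
  have hx_pp : d (e p p) p t = 0 := by
    have hbrk : brk (e t p) (e p p) = (e t p : Matrix (Fin r) (Fin r) R) := by
      simp [brk, e_mul_e, hpt, htp]
    have heq := hd (e t p) (e p p)
    rw [hbrk] at heq
    have h := congrFun (congrFun heq t) t
    simp only [brk, Matrix.add_apply, Matrix.sub_apply, mul_e, e_mul] at h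
    simp only [htp, hts, if_false, ite_false, ite_true, if_true] at h
    have hLHS : d (e t p) t t = 0 := hsupp _ t t (fun hh => htp hh.1) (fun hh => hts hh.1)
    rw [hLHS] at h
    linear_combination -h
  have hy_pp : d (e p p) s p = 0 := by
    have hbrk : brk (e p p) (e p s) = (e p s : Matrix (Fin r) (Fin r) R) := by
      simp [brk, e_mul_e, hps, hsp]
    have heq := hd (e p p) (e p s)
    rw [hbrk] at heq
    have h := congrFun (congrFun heq s) s
    simp only [brk, Matrix.add_apply, Matrix.sub_apply, mul_e, e_mul] at h
    simp only [hsp, if_false, ite_false, ite_true, if_true] at h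
    have hLHS : d (e p s) s s = 0 := hsupp _ s s (fun hh => hsp hh.1) (fun hh => hsp hh.2)
    rw [hLHS] at h
    linear_combination -h
  have hK0 : d (e p p) = 0 := by
    rw [formd (e p p), hx_pp, hy_pp, zero_smul, zero_smul, add_zero]
  have hK1 : ∀ a, a ≠ p → d (e a p) p t = 0 := by
    intro a hap
    have hbrk : brk (e a p) (e p p) = (e a p : Matrix (Fin r) (Fin r) R) := by
      simp [brk, e_mul_e, (Ne.symm hap : p ≠ a)]
    have heq := hd (e a p) (e p p)
    rw [hbrk, hK0, brk_zero_right, add_zero] at heq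
    have h := congrFun (congrFun heq p) t
    simp only [brk, Matrix.sub_apply, mul_e, e_mul, ite_true, if_true] at h
    simp only [htp, if_false, ite_false] at h
    apply htf
    linear_combination h
  have hK2 : ∀ b, b ≠ p → d (e p b) s p = 0 := by
    intro b hbp
    have hbrk : brk (e p p) (e p b) = (e p b : Matrix (Fin r) (Fin r) R) := by
      simp [brk, e_mul_e, hbp, (Ne.symm hbp : p ≠ b)]
    have heq := hd (e p p) (e p b)
    rw [hbrk, hK0, brk_zero_left, zero_add] at heq
    have h := congrFun (congrFun heq s) p
    simp only [brk, Matrix.sub_apply, mul_e, e_mul, ite_true, if_true] at h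
    simp only [hsp, if_false, ite_false] at h
    apply htf
    linear_combination h
  have hK3 : ∀ b, b ≠ p → d (e b p) = 0 ∧ d (e p b) = 0 ∧ d (e b b) = 0 := by
    intro b hbp
    have hpb : p ≠ b := Ne.symm hbp
    have hebp : d (e b p) = (d (e b p) s p) • e s p := by
      conv_lhs => rw [formd (e b p)]
      rw [hK1 b hbp, zero_smul, zero_add]
    have hepb : d (e p b) = (d (e p b) p t) • e p t := by
      conv_lhs => rw [formd (e p b)]
      rw [hK2 b hbp, zero_smul, add_zero]
    have hbrk : brk (e b p) (e p b) = (e b b - e p p : Matrix (Fin r) (Fin r) R) := by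
      simp [brk, e_mul_e]
    have heq := hd (e b p) (e p b)
    rw [hbrk, d_sub hdlin, hK0, sub_zero, hebp, hepb, brk_smul_left, brk_smul_right] at heq
    -- heq : d (e b b) = y • brk (e s p) (e p b) + x • brk (e b p) (e p t)
    have hy : d (e b p) s p = 0 := by
      have h := congrFun (congrFun heq s) b
      have hLHS : d (e b b) s b = 0 :=
        hsupp _ s b (fun hh => hsp hh.1) (fun hh => hbp hh.2)
      rw [hLHS] at h
      by_cases hbs : b = s
      · subst hbs
        simp only [brk, Matrix.add_apply, Matrix.smul_apply, Matrix.sub_apply, mul_e, e_mul,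
          e_apply, smul_eq_mul] at h
        simp only [hsp, hpt, hps, hbp, hts, htp, hst, if_false, ite_false, ite_true, if_true,
          and_true, true_and, and_self, ite_self] at h
        linear_combination -h
      · have hsb : s ≠ b := fun hh => hbs hh.symm
        simp only [brk, Matrix.add_apply, Matrix.smul_apply, Matrix.sub_apply, mul_e, e_mul,
          e_apply, smul_eq_mul] at h
        simp only [hsp, hpt, hps, hbp, hpb, hbs, hsb, hst, hts, if_false, ite_false, ite_true,
          if_true, and_true, true_and, and_self, and_false, false_and, ite_self] at h
        linear_combination -h
    have hx : d (e p b) p t = 0 := by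
      have h := congrFun (congrFun heq b) t
      have hLHS : d (e b b) b t = 0 :=
        hsupp _ b t (fun hh => hbp hh.1) (fun hh => htp hh.2)
      rw [hLHS] at h
      by_cases hbt : b = t
      · subst hbt
        simp only [brk, Matrix.add_apply, Matrix.smul_apply, Matrix.sub_apply, mul_e, e_mul,
          e_apply, smul_eq_mul] at h
        simp only [hsp, hpt, hps, hbp, hpb, hts, htp, hst, if_false, ite_false, ite_true,
          if_true, and_true, true_and, and_self, and_false, false_and, ite_self] at h
        linear_combination -h
      · have htb : t ≠ b := fun hh => hbt hh.symm
        simp only [brk, Matrix.add_apply, Matrix.smul_apply, Matrix.sub_apply, mul_e, e_mul,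
          e_apply, smul_eq_mul] at h
        simp only [hsp, hpt, hps, hbp, hpb, hbt, htb, hts, htp, hst, if_false, ite_false,
          ite_true, if_true, and_true, true_and, and_self, and_false, false_and, ite_self] at h
        linear_combination -h
    refine ⟨?_, ?_, ?_⟩
    · rw [hebp, hy, zero_smul]
    · rw [hepb, hx, zero_smul]
    · rw [heq, hy, hx, zero_smul, zero_smul, add_zero]
  have hK4 : ∀ a b, a ≠ p → b ≠ p → a ≠ b → d (e a b) = 0 := by
    intro a b hap hbp hab
    have hpa : p ≠ a := Ne.symm hap
    have hpb : p ≠ b := Ne.symm hbp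
    have hba : b ≠ a := Ne.symm hab
    have hy : d (e a b) s p = 0 := by
      have hbrk : brk (e a b) (e b b) = (e a b : Matrix (Fin r) (Fin r) R) := by
        simp [brk, e_mul_e, hba]
      have heq := hd (e a b) (e b b)
      rw [hbrk, (hK3 b hbp).2.2, brk_zero_right, add_zero] at heq
      have h := congrFun (congrFun heq s) p
      simp only [brk, Matrix.sub_apply, mul_e, e_mul] at h
      by_cases hbs : b = s
      · subst hbs
        simp only [hpb, hsp, if_false, ite_false, ite_true, if_true] at h
        apply htf
        linear_combination h
      · have hsb : s ≠ b := fun hh => hbs hh.symm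
        simp only [hpb, hsb, if_false, ite_false] at h
        linear_combination h
    have hx : d (e a b) p t = 0 := by
      by_cases hbt : t = b
      · have hbrk : brk (e a a) (e a b) = (e a b : Matrix (Fin r) (Fin r) R) := by
          simp [brk, e_mul_e, hba]
        have heq := hd (e a a) (e a b)
        rw [hbrk, (hK3 a hap).2.2, brk_zero_left, zero_add] at heq
        have h := congrFun (congrFun heq p) t
        have hta : t ≠ a := by rw [hbt]; exact hba
        simp only [brk, Matrix.sub_apply, mul_e, e_mul] at h
        simp only [hpa, hta, if_false, ite_false] at h
        linear_combination h
      · have hbrk : brk (e a b) (e b b) = (e a b : Matrix (Fin r) (Fin r) R) := by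
          simp [brk, e_mul_e, hba]
        have heq := hd (e a b) (e b b)
        rw [hbrk, (hK3 b hbp).2.2, brk_zero_right, add_zero] at heq
        have h := congrFun (congrFun heq p) t
        simp only [brk, Matrix.sub_apply, mul_e, e_mul] at h
        simp only [hpb, hbt, if_false, ite_false] at h
        linear_combination h
    rw [formd (e a b), hx, hy, zero_smul, zero_smul, add_zero]
  intro z
  rw [d_expand hdlin z]
  apply Finset.sum_eq_zero; intro a _
  apply Finset.sum_eq_zero; intro b _
  rcases eq_or_ne a p with rfl | hap
  · rcases eq_or_ne b a with rfl | hbp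
    · rw [hK0, smul_zero]
    · rw [(hK3 b hbp).2.1, smul_zero]
  · rcases eq_or_ne a b with rfl | hab
    · rw [(hK3 a hap).2.2, smul_zero]
    · rcases eq_or_ne b p with rfl | hbp
      · rw [(hK3 a hap).1, smul_zero]
      · rw [hK4 a b hap hbp hab, smul_zero]


end Kill

section Main
variable {R : Type*} [CommRing R] {r : ℕ}
  {ψ : Matrix (Fin r) (Fin r) R → Matrix (Fin r) (Fin r) R → Matrix (Fin r) (Fin r) R → Matrix (Fin r) (Fin r) R}

lemma IsLieDer3.swap12 (hψ : IsLieDer3 R ψ) :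
    IsLieDer3 R (fun x y z => ψ y x z) :=
  ⟨fun y z => hψ.2.1 y z, fun x z => hψ.1 x z, fun x y => hψ.2.2.1 y x,
   fun y z a b => hψ.2.2.2.2.1 y z a b, fun x z a b => hψ.2.2.2.1 x z a b,
   fun x y a b => hψ.2.2.2.2.2 y x a b⟩

variable (htf : ∀ x : R, x + x = 0 → x = 0) (hr : 2 < r) (hψ : IsLieDer3 R ψ)

include htf hr hψ

/-- diagonal of `ψ(e_pp,v,w)` is constant -/
lemma S2' {p : Fin r} (v w : Matrix (Fin r) (Fin r) R) (a b : Fin r) :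
    ψ (e p p) v w a a = ψ (e p p) v w b b := by
  have key : ∀ q, ψ (e p p) v w q q = ψ (e p p) v w p p := by
    intro q
    rcases eq_or_ne q p with rfl | h
    · rfl
    · exact (S2 hψ (Ne.symm h) v w).symm
  rw [key a, key b]

lemma step2a {p s : Fin r} (hps : p ≠ s) (w : Matrix (Fin r) (Fin r) R) :
    central (ψ (e p p) (e s s) w) := by
  have hψ' := hψ.swap12
  have hoff : ∀ z a b, a ≠ b → ¬(a = p ∧ b = s) → ¬(a = s ∧ b = p) →
      ψ (e p p) (e s s) z a b = 0 := by
    intro z a b hab hc1 hc2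
    by_cases hap : a = p
    · have hbs : b ≠ s := fun hh => hc1 ⟨hap, hh⟩
      rw [hap] at hab ⊢
      exact S1 hψ' hps hbs hab (e p p) z
    · by_cases hbp : b = p
      · have has : a ≠ s := fun hh => hc2 ⟨hh, hbp⟩
        rw [hbp] at hab ⊢
        exact S1 hψ' has hps hab (e p p) z
      · exact S1 hψ hap hbp hab (e s s) z
  have hdiag : ∀ z a b, ψ (e p p) (e s s) z a a = ψ (e p p) (e s s) z b b := by
    intro z a b
    exact S2' htf hr hψ (e s s) z a b
  have hkill := kill1 htf hr (hψ.2.2.1 (e p p) (e s s))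
    (fun u v' => hψ.2.2.2.2.2 (e p p) (e s s) u v') hps hoff hdiag
  exact central_of_entries (by omega) _ (fun a b hab => hkill w a b hab) (hdiag w)

lemma step2b {p t : Fin r} (htp : t ≠ p) (w : Matrix (Fin r) (Fin r) R) :
    ψ (e p p) (e p t) w = 0 := by
  have hψ' := hψ.swap12
  obtain ⟨m, hmp, hmt⟩ := exists_third hr p t
  have hpt : p ≠ t := Ne.symm htp
  have hsupp : ∀ z a b, a ≠ p → ψ (e p p) (e p t) z a b = 0 := by
    intro z a b hap
    by_cases hbp : b = p
    · rw [hbp]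
      exact S4b hψ' htf hpt hap (e p p) z
    · by_cases hbt : b = t
      · by_cases hab : a = b
        · rw [← hab, hab.trans hbt, S2' htf hr hψ (e p t) z t m]
          exact S4a hψ' hpt hmp hmp hmt (e p p) z
        · have hat : a ≠ t := fun hh => hab (hh.trans hbt.symm)
          rw [hbt]
          exact S1 hψ hap htp hat (e p t) z
      · by_cases hab : a = b
        · rw [← hab]
          have hat : a ≠ t := fun hh => hbt (hab.symm.trans hh)
          have hap2 : a ≠ p := hap
          exact S4a hψ' hpt hap2 hap2 hat (e p p) z
        · exact S1 hψ hap hbp hab (e p t) z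
  have hdiagp : ∀ z, ψ (e p p) (e p t) z p p = 0 := by
    intro z
    rw [S2' htf hr hψ (e p t) z p m]
    exact S4a hψ' hpt hmp hmp hmt (e p p) z
  exact kill_row htf hr (hψ.2.2.1 (e p p) (e p t))
    (fun u v' => hψ.2.2.2.2.2 (e p p) (e p t) u v') hsupp hdiagp w

lemma step2bcol {p s : Fin r} (hsp : s ≠ p) (w : Matrix (Fin r) (Fin r) R) :
    ψ (e p p) (e s p) w = 0 := by
  have hψ' := hψ.swap12
  obtain ⟨m, hmp, hms⟩ := exists_third hr p s
  have hsupp : ∀ z a b, b ≠ p → ψ (e p p) (e s p) z a b = 0 := by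
    intro z a b hbp
    by_cases hbs : b = s
    · by_cases has : a = s
      · rw [has, hbs, S2' htf hr hψ (e s p) z s m]
        exact S4a hψ' hsp hms hms hmp (e p p) z
      · rw [hbs]
        exact S4b hψ' htf hsp has (e p p) z
    · by_cases hab : a = b
      · rw [← hab]
        have has : a ≠ s := fun hh => hbs (hab.symm.trans hh)
        have hap : a ≠ p := fun hh => hbp (hab.symm.trans hh)
        exact S4a hψ' hsp has has hap (e p p) z
      · by_cases hap : a = p
        · rw [hap]
          exact S4a hψ' hsp (Ne.symm hsp) hbs hbp (e p p) z
        · exact S1 hψ hap hbp hab (e s p) z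
  have hdiagp : ∀ z, ψ (e p p) (e s p) z p p = 0 := by
    intro z
    rw [S2' htf hr hψ (e s p) z p m]
    exact S4a hψ' hsp hms hms hmp (e p p) z
  exact kill_col htf hr (hψ.2.2.1 (e p p) (e s p))
    (fun u v' => hψ.2.2.2.2.2 (e p p) (e s p) u v') hsupp hdiagp w

lemma step2c {p s t : Fin r} (hps : p ≠ s) (hpt : p ≠ t) (hst : s ≠ t)
    (w : Matrix (Fin r) (Fin r) R) : ψ (e p p) (e s t) w = 0 := by
  have hψ' := hψ.swap12
  have hsupp : ∀ z a b, ¬(a = p ∧ b = t) → ¬(a = s ∧ b = p) →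
      ψ (e p p) (e s t) z a b = 0 := by
    intro z a b hc1 hc2
    by_cases hab : a = b
    · by_cases has : a = s
      · rw [← hab, has, S2' htf hr hψ (e s t) z s p]
        exact S4a hψ' hst hps hps hpt (e p p) z
      · by_cases hat : a = t
        · rw [← hab, hat, S2' htf hr hψ (e s t) z t p]
          exact S4a hψ' hst hps hps hpt (e p p) z
        · rw [← hab]
          exact S4a hψ' hst has has hat (e p p) z
    · by_cases hap : a = p
      · have hbt : b ≠ t := fun hh => hc1 ⟨hap, hh⟩
        by_cases hbs : b = s
        · rw [hap, hbs]
          exact S4b hψ' htf hst hps (e p p) z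
        · rw [hap]
          exact S4a hψ' hst hps hbs hbt (e p p) z
      · by_cases hbp : b = p
        · have has : a ≠ s := fun hh => hc2 ⟨hh, hbp⟩
          rw [hbp]
          exact S4a hψ' hst has hps hpt (e p p) z
        · exact S1 hψ hap hbp hab (e s t) z
  exact kill3 htf (hψ.2.2.1 (e p p) (e s t))
    (fun u v' => hψ.2.2.2.2.2 (e p p) (e s t) u v') hps hpt hst hsupp w

lemma step2d (p : Fin r) (w : Matrix (Fin r) (Fin r) R) :
    central (ψ (e p p) (e p p) w) := by
  have hoff : ∀ a b, a ≠ b → ψ (e p p) (e p p) w a b = 0 := by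
    intro a b hab
    by_cases hap : a = p
    · have hbp : b ≠ p := fun hh => hab (hap.trans hh.symm)
      rw [hap, S3row hψ hbp (e p p) w,
        central_offdiag (step2a htf hr hψ hbp w) (Ne.symm hbp), neg_zero]
    · by_cases hbp : b = p
      · rw [hbp, S3col hψ hap (e p p) w,
          central_offdiag (step2a htf hr hψ hap w) hap, neg_zero]
      · exact S1 hψ hap hbp hab (e p p) w
  exact central_of_entries (by omega) _ hoff (S2' htf hr hψ (e p p) w)
end Main

section Main2
variable {R : Type*} [CommRing R] {r : ℕ}
  {ψ : Matrix (Fin r) (Fin r) R → Matrix (Fin r) (Fin r) R → Matrix (Fin r) (Fin r) R → Matrix (Fin r) (Fin r) R}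
  (htf : ∀ x : R, x + x = 0 → x = 0) (hr : 2 < r) (hψ : IsLieDer3 R ψ)

include htf hr hψ

lemma Ga1 (p : Fin r) (v w : Matrix (Fin r) (Fin r) R) :
    central (ψ (e p p) v w) := by
  have hexp := d_expand (hψ.2.1 (e p p) w) v
  rw [hexp]
  apply central_sum
  intro s _
  apply central_sum
  intro t _
  apply central_smul
  rcases eq_or_ne s t with rfl | hst
  · rcases eq_or_ne s p with rfl | hsp
    · exact step2d htf hr hψ s w
    · exact step2a htf hr hψ (Ne.symm hsp) w
  · rcases eq_or_ne s p with rfl | hsp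
    · rw [step2b htf hr hψ (Ne.symm hst) w]
      exact central_zero
    · rcases eq_or_ne t p with rfl | htp
      · rw [step2bcol htf hr hψ hsp w]
        exact central_zero
      · rw [step2c htf hr hψ (Ne.symm hsp) (Ne.symm htp) hst w]
        exact central_zero

lemma Ga2 (s : Fin r) (v w : Matrix (Fin r) (Fin r) R) :
    central (ψ v (e s s) w) :=
  Ga1 htf hr hψ.swap12 s v w

/-- `ψ(e_pq, v, w)` is supported at the `(p,q)` entry. -/
lemma step3form {p q : Fin r} (hpq : p ≠ q) (v w : Matrix (Fin r) (Fin r) R)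
    (a b : Fin r) (hab : ¬(a = p ∧ b = q)) : ψ (e p q) v w a b = 0 := by
  by_cases hap : a = p
  · have hbq : b ≠ q := fun hh => hab ⟨hap, hh⟩
    rw [hap, S7 hψ hpq hbq v w]
    exact central_offdiag (Ga1 htf hr hψ q v w) (Ne.symm hbq)
  · by_cases hbq : b = q
    · rw [hbq, S5 hψ hpq hap v w]
      exact central_offdiag (Ga1 htf hr hψ p v w) hap
    · by_cases hbp : b = p
      · rw [hbp]
        exact S4b hψ htf hpq hap v w
      · exact S4a hψ hpq hap hbp hbq v w

end Main2

section Main3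
variable {R : Type*} [CommRing R] {r : ℕ}
  {ψ : Matrix (Fin r) (Fin r) R → Matrix (Fin r) (Fin r) R → Matrix (Fin r) (Fin r) R → Matrix (Fin r) (Fin r) R}
  (htf : ∀ x : R, x + x = 0 → x = 0) (hr : 2 < r) (hψ : IsLieDer3 R ψ)

include htf hr hψ

lemma step3cross {p q s t : Fin r} (hpq : p ≠ q) (hst : s ≠ t)
    (hne : ¬(p = s ∧ q = t)) (w : Matrix (Fin r) (Fin r) R) :
    ψ (e p q) (e s t) w = 0 := by
  ext a b
  simp only [Matrix.zero_apply]
  by_cases hc : a = p ∧ b = q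
  · obtain ⟨rfl, rfl⟩ := hc
    have h2 := step3form htf hr hψ.swap12 hst (e a b) w a b
      (fun hh => hne ⟨hh.1.symm ▸ rfl, hh.2.symm ▸ rfl⟩)
    exact h2
  · exact step3form htf hr hψ hpq (e s t) w a b hc

lemma step3same {p q : Fin r} (hpq : p ≠ q) (w : Matrix (Fin r) (Fin r) R) :
    ψ (e p q) (e p q) w = 0 := by
  obtain ⟨m, hmp, hmq⟩ := exists_third hr p q
  have hbrk : brk (e p m) (e m q) = (e p q : Matrix (Fin r) (Fin r) R) := by
    simp [brk, e_mul_e, hpq, Ne.symm hpq]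
  have heq := hψ.2.2.2.2.1 (e p q) w (e p m) (e m q)
  rw [hbrk] at heq
  rw [heq, step3cross htf hr hψ hpq (fun hh : p = m => hmp hh.symm) 
    (fun hh => hmq hh.2.symm) w,
    step3cross htf hr hψ hpq (fun hh : m = q => hmq hh)
    (fun hh => hmp hh.1.symm) w, brk_zero_left, brk_zero_right, add_zero]

lemma step3diag {p q : Fin r} (hpq : p ≠ q) (s : Fin r) (w : Matrix (Fin r) (Fin r) R) :
    ψ (e p q) (e s s) w = 0 := by
  have hsupp : ∀ z a b, a ≠ p → ψ (e p q) (e s s) z a b = 0 := by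
    intro z a b hap
    exact step3form htf hr hψ hpq (e s s) z a b (fun hh => hap hh.1)
  have hdiagp : ∀ z, ψ (e p q) (e s s) z p p = 0 := by
    intro z
    exact step3form htf hr hψ hpq (e s s) z p p (fun hh => hpq hh.2)
  exact kill_row htf hr (hψ.2.2.1 (e p q) (e s s))
    (fun u v' => hψ.2.2.2.2.2 (e p q) (e s s) u v') hsupp hdiagp w

lemma step3final {p q : Fin r} (hpq : p ≠ q) (v w : Matrix (Fin r) (Fin r) R) :
    ψ (e p q) v w = 0 := by
  rw [d_expand (hψ.2.1 (e p q) w) v]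
  apply Finset.sum_eq_zero; intro s _
  apply Finset.sum_eq_zero; intro t _
  rcases eq_or_ne s t with rfl | hst
  · rw [step3diag htf hr hψ hpq s w, smul_zero]
  · by_cases hc : p = s ∧ q = t
    · obtain ⟨rfl, rfl⟩ := hc
      rw [step3same htf hr hψ hpq w, smul_zero]
    · rw [step3cross htf hr hψ hpq hst hc w, smul_zero]

theorem central3 (x y z : Matrix (Fin r) (Fin r) R) : central (ψ x y z) := by
  have hexp := d_expand (hψ.1 y z) x
  rw [hexp]
  apply central_sum
  intro a _
  apply central_sum
  intro b _
  apply central_smul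
  rcases eq_or_ne a b with rfl | hab
  · exact Ga1 htf hr hψ a y z
  · rw [step3final htf hr hψ hab y z]
    exact central_zero

end Main3


lemma iterBr_zero {G : Type*} [Ring G] : ∀ {n : ℕ} (x : Fin n → G),
    iterBr x (0 : G) = 0
  | 0, x => rfl
  | (n+1), x => by
      show brk (x 0) (iterBr (Fin.tail x) (0:G)) = 0
      rw [iterBr_zero (Fin.tail x)]
      simp [brk]


theorem nLieDer_matrix_decomposition {R : Type*} [CommRing R]
    (htf : ∀ x : R, x + x = 0 → x = 0)
    (r : ℕ) (hr : 2 < r) (n : ℕ) (hn : 3 ≤ n)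
    (φ : (Fin n → Matrix (Fin r) (Fin r) R) → Matrix (Fin r) (Fin r) R)
    (hφ : IsNLieDer R φ) :
    ∃ X0 : Matrix (Fin r) (Fin r) R,
      (∀ u v : Matrix (Fin r) (Fin r) R, brk (brk u v) X0 = 0) ∧
      ∀ x : Fin n → Matrix (Fin r) (Fin r) R, central (φ x - iterBr x X0) := by
  obtain ⟨m, rfl⟩ : ∃ m, n = m + 3 := ⟨n - 3, by omega⟩
  refine ⟨0, fun u v => by simp [brk], ?_⟩
  intro x
  rw [iterBr_zero x, sub_zero]
  have h01 : (0 : Fin (m+3)) ≠ 1 := Fin.ne_of_val_ne (by simp)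
  have h02 : (0 : Fin (m+3)) ≠ 2 := Fin.ne_of_val_ne (by simp [Fin.val_two, Nat.mod_eq_of_lt (show 2 < m + 3 by omega)])
  have h12 : (1 : Fin (m+3)) ≠ 2 := Fin.ne_of_val_ne (by simp [Fin.val_two, Nat.mod_eq_of_lt (show 2 < m + 3 by omega)])
  set ψ : Matrix (Fin r) (Fin r) R → Matrix (Fin r) (Fin r) R → Matrix (Fin r) (Fin r) R → Matrix (Fin r) (Fin r) R := fun a b c =>
    φ (Function.update (Function.update (Function.update x 0 a) 1 b) 2 c) with hψdef
  have hcomm1 : ∀ (a b c : Matrix (Fin r) (Fin r) R),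
      Function.update (Function.update (Function.update x 0 a) 1 b) 2 c =
      Function.update (Function.update (Function.update x 1 b) 2 c) 0 a := by
    intro a b c
    rw [Function.update_comm h01, Function.update_comm h02]
  have hcomm2 : ∀ (a b c : Matrix (Fin r) (Fin r) R),
      Function.update (Function.update (Function.update x 0 a) 1 b) 2 c =
      Function.update (Function.update (Function.update x 0 a) 2 c) 1 b := by
    intro a b c
    rw [Function.update_comm h12]
  have hψ : IsLieDer3 R ψ := by
    refine ⟨?_, ?_, ?_, ?_, ?_, ?_⟩
    · intro b c
      have heq : (fun a => ψ a b c) =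
          (fun t => φ (Function.update (Function.update (Function.update x 1 b) 2 c) 0 t)) := by
        funext a
        exact congrArg φ (hcomm1 a b c)
      rw [heq]
      exact (hφ 0 (Function.update (Function.update x 1 b) 2 c)).1
    · intro a c
      have heq : (fun b => ψ a b c) =
          (fun t => φ (Function.update (Function.update (Function.update x 0 a) 2 c) 1 t)) := by
        funext b
        exact congrArg φ (hcomm2 a b c)
      rw [heq]
      exact (hφ 1 (Function.update (Function.update x 0 a) 2 c)).1
    · intro a b
      exact (hφ 2 (Function.update (Function.update x 0 a) 1 b)).1
    · intro y z a b
      have key := (hφ 0 (Function.update (Function.update x 1 y) 2 z)).2 a b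
      have e1 : ∀ t : Matrix (Fin r) (Fin r) R, φ (Function.update (Function.update (Function.update x 1 y) 2 z) 0 t)
          = ψ t y z := fun t => (congrArg φ (hcomm1 t y z)).symm
      rw [e1, e1, e1] at key
      exact key
    · intro a z y1 y2
      have key := (hφ 1 (Function.update (Function.update x 0 a) 2 z)).2 y1 y2
      have e1 : ∀ t : Matrix (Fin r) (Fin r) R, φ (Function.update (Function.update (Function.update x 0 a) 2 z) 1 t)
          = ψ a t z := fun t => (congrArg φ (hcomm2 a t z)).symm
      rw [e1, e1, e1] at key
      exact key
    · intro a b z1 z2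
      exact (hφ 2 (Function.update (Function.update x 0 a) 1 b)).2 z1 z2
  have hx : φ x = ψ (x 0) (x 1) (x 2) := by
    rw [hψdef]
    simp only [Function.update_eq_self]
  rw [hx]
  exact central3 htf hr hψ (x 0) (x 1) (x 2)
end

section
/- Let G be a triangular algebra (as in the context, so the Peirce corner N = fGe is zero) satisfying: (H1) every element of Z(A) has the form e*w*e for some w ∈ Z(G), and every element of Z(B) has the form f*w*f for some w ∈ Z(G); (H2) A contains no nonzero central ideal (there is no nonzero c ∈ Z(A) with a*c ∈ Z(A) for all a ∈ A) or B contains no nonzero central ideal (analogously in B); and (H5') every R-linear derivation d of G (d(x*y) = d(x)*y + x*d(y)) is inner, i.e. of the form d(x) = [g,x] for some fixed g ∈ G. Let n ≥ 3 and let φ : G^n → G be an n-Lie derivation. Set X0 = e*φ(e,…,e)*f, where φ(e,…,e) has all n arguments equal to e. Then [[u,v],X0] = 0 for all u,v ∈ G, and for all x1,…,xn ∈ G the element φ(x1,…,xn) - [x1,[x2,…,[xn,X0]…]] lies in Z(G). -/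
namespace TLA

section Ring
variable {G : Type*} [Ring G] {e : G}

theorem hef (he : e * e = e) : e * (1 - e) = 0 := by
  rw [mul_sub, mul_one, he, sub_self]
theorem hfe (he : e * e = e) : (1 - e) * e = 0 := by
  rw [sub_mul, one_mul, he, sub_self]
theorem hff (he : e * e = e) : (1 - e) * (1 - e) = (1 - e) := by
  have h : (1 - e) * (1 - e) = 1 - e - e + e * e := by noncomm_ring
  rw [h, he]; noncomm_ring
theorem mE (he : e * e = e) {m : G} (hm : corner e (1-e) m) : m * e = 0 := by
  conv_lhs => rw [← hm]
  rw [mul_assoc, hfe he, mul_zero]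
theorem Em (he : e * e = e) {m : G} (hm : corner e (1-e) m) : e * m = m := by
  conv_lhs => rw [← hm, ← mul_assoc, ← mul_assoc, he]
  exact hm
theorem mF (he : e * e = e) {m : G} (hm : corner e (1-e) m) : m * (1-e) = m := by
  conv_lhs => rw [← hm, mul_assoc, mul_assoc, hff he, ← mul_assoc]
  exact hm
theorem Fm (he : e * e = e) {m : G} (hm : corner e (1-e) m) : (1-e) * m = 0 := by
  conv_lhs => rw [← hm, ← mul_assoc, ← mul_assoc, hfe he]
  rw [zero_mul, zero_mul]
theorem aE (he : e * e = e) {a : G} (ha : corner e e a) : a * e = a := by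
  conv_lhs => rw [← ha, mul_assoc, mul_assoc, he, ← mul_assoc]
  exact ha
theorem Ea (he : e * e = e) {a : G} (ha : corner e e a) : e * a = a := by
  conv_lhs => rw [← ha, ← mul_assoc, ← mul_assoc, he]
  exact ha
theorem aF (he : e * e = e) {a : G} (ha : corner e e a) : a * (1-e) = 0 := by
  conv_lhs => rw [← ha, mul_assoc, mul_assoc, hef he, mul_zero, mul_zero]
theorem Fa (he : e * e = e) {a : G} (ha : corner e e a) : (1-e) * a = 0 := by
  conv_lhs => rw [← ha, ← mul_assoc, ← mul_assoc, hfe he, zero_mul, zero_mul]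
theorem bF (he : e * e = e) {b : G} (hb : corner (1-e) (1-e) b) : b * (1-e) = b := by
  conv_lhs => rw [← hb, mul_assoc, mul_assoc, hff he, ← mul_assoc]
  exact hb
theorem Fb (he : e * e = e) {b : G} (hb : corner (1-e) (1-e) b) : (1-e) * b = b := by
  conv_lhs => rw [← hb, ← mul_assoc, ← mul_assoc, hff he]
  exact hb
theorem bE (he : e * e = e) {b : G} (hb : corner (1-e) (1-e) b) : b * e = 0 := by
  conv_lhs => rw [← hb, mul_assoc, hfe he, mul_zero]
theorem Eb (he : e * e = e) {b : G} (hb : corner (1-e) (1-e) b) : e * b = 0 := by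
  conv_lhs => rw [← hb, ← mul_assoc, ← mul_assoc, hef he, zero_mul, zero_mul]

-- products
theorem mulMM (he : e*e = e) {m m' : G} (hm : corner e (1-e) m) (hm' : corner e (1-e) m') :
    m * m' = 0 := by
  rw [← Em he hm', ← mul_assoc, mE he hm, zero_mul]

theorem mulMA (he : e*e = e) {m a : G} (hm : corner e (1-e) m) (ha : corner e e a) :
    m * a = 0 := by
  rw [← Ea he ha, ← mul_assoc, mE he hm, zero_mul]

theorem mulBM (he : e*e = e) {b m : G} (hb : corner (1-e) (1-e) b) (hm : corner e (1-e) m) :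
    b * m = 0 := by
  rw [← Em he hm, ← mul_assoc, bE he hb, zero_mul]

theorem mulAB (he : e*e = e) {a b : G} (ha : corner e e a) (hb : corner (1-e) (1-e) b) :
    a * b = 0 := by
  rw [← Fb he hb, ← mul_assoc, aF he ha, zero_mul]

theorem mulBA (he : e*e = e) {a b : G} (hb : corner (1-e) (1-e) b) (ha : corner e e a) :
    b * a = 0 := by
  rw [← Ea he ha, ← mul_assoc, bE he hb, zero_mul]

theorem cornerAM (he : e*e = e) {a m : G} (ha : corner e e a) (hm : corner e (1-e) m) :
    corner e (1-e) (a * m) := by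
  show e * (a*m) * (1-e) = a*m
  rw [← mul_assoc, Ea he ha, mul_assoc, mF he hm]

theorem cornerMB (he : e*e = e) {m b : G} (hm : corner e (1-e) m) (hb : corner (1-e) (1-e) b) :
    corner e (1-e) (m * b) := by
  show e * (m*b) * (1-e) = m*b
  rw [← mul_assoc, Em he hm, mul_assoc, bF he hb]

theorem cornerAA (he : e*e = e) {a a' : G} (ha : corner e e a) (ha' : corner e e a') :
    corner e e (a * a') := by
  show e * (a*a') * e = a*a'
  rw [← mul_assoc, Ea he ha, mul_assoc, aE he ha']

theorem cornerBB (he : e*e = e) {b b' : G} (hb : corner (1-e) (1-e) b) (hb' : corner (1-e) (1-e) b') :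
    corner (1-e) (1-e) (b * b') := by
  show (1-e) * (b*b') * (1-e) = b*b'
  rw [← mul_assoc, Fb he hb, mul_assoc, bF he hb']

theorem corner_sub {p q x y : G} (hx : corner p q x) (hy : corner p q y) :
    corner p q (x - y) := by
  show p * (x-y) * q = x - y
  rw [mul_sub, sub_mul, hx, hy]

theorem corner_add {p q x y : G} (hx : corner p q x) (hy : corner p q y) :
    corner p q (x + y) := by
  show p * (x+y) * q = x + y
  rw [mul_add, add_mul, hx, hy]

theorem corner_neg {p q x : G} (hx : corner p q x) : corner p q (-x) := by
  show p * (-x) * q = -x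
  rw [mul_neg, neg_mul, hx]

theorem corner_zero {p q : G} : corner p q (0 : G) := by
  show p * 0 * q = 0
  rw [mul_zero, zero_mul]

theorem corner_brk_diag (he : e*e = e) {a a' : G} (ha : corner e e a) (ha' : corner e e a') :
    corner e e (brk a a') :=
  corner_sub (cornerAA he ha ha') (cornerAA he ha' ha)

theorem corner_brk_diagB (he : e*e = e) {b b' : G} (hb : corner (1-e) (1-e) b) (hb' : corner (1-e) (1-e) b') :
    corner (1-e) (1-e) (brk b b') :=
  corner_sub (cornerBB he hb hb') (cornerBB he hb' hb)

-- Peirce decomposition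
theorem peirce (htri : ∀ g : G, (1-e) * g * e = 0) (g : G) :
    e*g*e + e*g*(1-e) + (1-e)*g*(1-e) = g := by
  have h : e*g*e + e*g*(1-e) + ((1-e)*g*e + (1-e)*g*(1-e)) = g := by noncomm_ring
  rw [htri g, zero_add] at h
  exact h

theorem ge_eq (htri : ∀ g : G, (1-e) * g * e = 0) (g : G) : g * e = e*g*e := by
  have h : g * e = e*g*e + (1-e)*g*e := by noncomm_ring
  rw [htri g, add_zero] at h
  exact h

theorem fg_eq (htri : ∀ g : G, (1-e) * g * e = 0) (g : G) : (1-e) * g = (1-e)*g*(1-e) := by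
  have h : (1-e) * g = (1-e)*g*e + (1-e)*g*(1-e) := by noncomm_ring
  rw [htri g, zero_add] at h
  exact h

theorem gM (he : e*e = e) (htri : ∀ g : G, (1-e) * g * e = 0) (g : G) {m : G}
    (hm : corner e (1-e) m) : g * m = (e*g*e) * m := by
  conv_lhs => rw [← Em he hm, ← mul_assoc, ge_eq htri]

theorem mG (he : e*e = e) (htri : ∀ g : G, (1-e) * g * e = 0) (g : G) {m : G}
    (hm : corner e (1-e) m) : m * g = m * ((1-e)*g*(1-e)) := by
  conv_lhs => rw [← mF he hm, mul_assoc, fg_eq htri]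

theorem brk_gM (he : e*e = e) (htri : ∀ g : G, (1-e) * g * e = 0) (g : G) {m : G}
    (hm : corner e (1-e) m) : brk g m = (e*g*e) * m - m * ((1-e)*g*(1-e)) := by
  show g*m - m*g = _
  rw [gM he htri g hm, mG he htri g hm]

theorem brkM_corner (he : e*e = e) (htri : ∀ g : G, (1-e) * g * e = 0) (g : G) {m : G}
    (hm : corner e (1-e) m) : corner e (1-e) (brk g m) := by
  rw [brk_gM he htri g hm]
  refine corner_sub (cornerAM he ?_ hm) (cornerMB he hm ?_)
  · show e * (e*g*e) * e = e*g*e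
    rw [← mul_assoc, ← mul_assoc, he, mul_assoc, mul_assoc, he, ← mul_assoc]
  · show (1-e) * ((1-e)*g*(1-e)) * (1-e) = (1-e)*g*(1-e)
    rw [← mul_assoc, ← mul_assoc, hff he, mul_assoc, mul_assoc, hff he, ← mul_assoc]

theorem cornerPA (he : e*e = e) (g : G) : corner e e (e*g*e) := by
  show e * (e*g*e) * e = e*g*e
  rw [← mul_assoc, ← mul_assoc, he, mul_assoc, mul_assoc, he, ← mul_assoc]

theorem cornerPM (he : e*e = e) (g : G) : corner e (1-e) (e*g*(1-e)) := by
  show e * (e*g*(1-e)) * (1-e) = e*g*(1-e)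
  rw [← mul_assoc, ← mul_assoc, he, mul_assoc, mul_assoc, hff he, ← mul_assoc]

theorem cornerPB (he : e*e = e) (g : G) : corner (1-e) (1-e) ((1-e)*g*(1-e)) := by
  show (1-e) * ((1-e)*g*(1-e)) * (1-e) = (1-e)*g*(1-e)
  rw [← mul_assoc, ← mul_assoc, hff he, mul_assoc, mul_assoc, hff he, ← mul_assoc]

theorem eMe_zero (he : e*e = e) {m : G} (hm : corner e (1-e) m) : e*m*e = 0 := by
  rw [Em he hm, mE he hm]

theorem fMf_zero (he : e*e = e) {m : G} (hm : corner e (1-e) m) : (1-e)*m*(1-e) = 0 := by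
  rw [Fm he hm, zero_mul]



theorem centerHalf (he : e*e = e) {w : G} (hwc : central w) {m : G} (hm : corner e (1-e) m) :
    (e*w*e) * m = m * ((1-e)*w*(1-e)) := by
  have h1 : (e*w*e)*m = m*w := by
    rw [mul_assoc, Em he hm, mul_assoc, hwc m, ← mul_assoc, Em he hm]
  have h2 : m*((1-e)*w*(1-e)) = m*w := by
    rw [← mul_assoc, ← mul_assoc, mF he hm, mul_assoc, hwc (1-e), ← mul_assoc, mF he hm]
  rw [h1, h2]

theorem centerA (he : e*e = e) {w : G} (hwc : central w) {a : G} (ha : corner e e a) :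
    (e*w*e) * a = a * (e*w*e) := by
  have h1 : (e*w*e)*a = a*w := by
    rw [mul_assoc, Ea he ha, mul_assoc, hwc a, ← mul_assoc, Ea he ha]
  have h2 : a*(e*w*e) = a*w := by
    rw [← mul_assoc, ← mul_assoc, aE he ha, mul_assoc, hwc e, ← mul_assoc, aE he ha]
  rw [h1, h2]

theorem centerB (he : e*e = e) {w : G} (hwc : central w) {b : G} (hb : corner (1-e) (1-e) b) :
    ((1-e)*w*(1-e)) * b = b * ((1-e)*w*(1-e)) := by
  have h1 : ((1-e)*w*(1-e))*b = b*w := by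
    rw [mul_assoc, Fb he hb, mul_assoc, hwc b, ← mul_assoc, Fb he hb]
  have h2 : b*((1-e)*w*(1-e)) = b*w := by
    rw [← mul_assoc, ← mul_assoc, bF he hb, mul_assoc, hwc (1-e), ← mul_assoc, bF he hb]
  rw [h1, h2]

theorem central_of (he : e*e = e) (htri : ∀ g : G, (1-e) * g * e = 0)
    (hfa : ∀ a, corner e e a → (∀ m, corner e (1-e) m → a * m = 0) → a = 0)
    (hfb : ∀ b, corner (1-e) (1-e) b → (∀ m, corner e (1-e) m → m * b = 0) → b = 0)
    {z : G} (hM : e*z*(1-e) = 0)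
    (hcompat : ∀ m, corner e (1-e) m → (e*z*e) * m = m * ((1-e)*z*(1-e))) :
    central z := by
  intro g
  have hz : z = e*z*e + (1-e)*z*(1-e) := by
    have hp := peirce htri z
    rw [hM, add_zero] at hp
    exact hp.symm
  have hAA : ∀ a', corner e e a' → (e*z*e) * a' = a' * (e*z*e) := by
    intro a' ha'
    refine sub_eq_zero.mp (hfa _ (corner_sub (cornerAA he (cornerPA he z) ha')
      (cornerAA he ha' (cornerPA he z))) ?_)
    intro m hm
    have h1 : (e*z*e)*(a'*m) = (a'*m)*((1-e)*z*(1-e)) := hcompat _ (cornerAM he ha' hm)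
    have h2 : (e*z*e)*m = m*((1-e)*z*(1-e)) := hcompat m hm
    calc ((e*z*e)*a' - a'*(e*z*e))*m = (e*z*e)*(a'*m) - a'*((e*z*e)*m) := by noncomm_ring
    _ = (a'*m)*((1-e)*z*(1-e)) - a'*(m*((1-e)*z*(1-e))) := by rw [h1, h2]
    _ = 0 := by noncomm_ring
  have hBB : ∀ b', corner (1-e) (1-e) b' → ((1-e)*z*(1-e)) * b' = b' * ((1-e)*z*(1-e)) := by
    intro b' hb'
    refine sub_eq_zero.mp (hfb _ (corner_sub (cornerBB he (cornerPB he z) hb')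
      (cornerBB he hb' (cornerPB he z))) ?_)
    intro m hm
    have h1 : (e*z*e)*(m*b') = (m*b')*((1-e)*z*(1-e)) := hcompat _ (cornerMB he hm hb')
    have h2 : (e*z*e)*m = m*((1-e)*z*(1-e)) := hcompat m hm
    calc m*(((1-e)*z*(1-e))*b' - b'*((1-e)*z*(1-e)))
        = (m*((1-e)*z*(1-e)))*b' - (m*b')*((1-e)*z*(1-e)) := by noncomm_ring
    _ = ((e*z*e)*m)*b' - (e*z*e)*(m*b') := by rw [← h2, ← h1]
    _ = 0 := by noncomm_ring
  have hgdec := peirce htri g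
  have expand1 : z*g = (e*z*e)*(e*g*e) + (e*z*e)*(e*g*(1-e)) + (e*z*e)*((1-e)*g*(1-e))
      + ((1-e)*z*(1-e))*(e*g*e) + ((1-e)*z*(1-e))*(e*g*(1-e)) + ((1-e)*z*(1-e))*((1-e)*g*(1-e)) := by
    conv_lhs => rw [hz, ← hgdec]
    noncomm_ring
  have expand2 : g*z = (e*g*e)*(e*z*e) + (e*g*e)*((1-e)*z*(1-e)) + (e*g*(1-e))*(e*z*e)
      + (e*g*(1-e))*((1-e)*z*(1-e)) + ((1-e)*g*(1-e))*(e*z*e) + ((1-e)*g*(1-e))*((1-e)*z*(1-e)) := by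
    conv_lhs => rw [hz, ← hgdec]
    noncomm_ring
  rw [expand1, expand2,
    mulAB he (cornerPA he z) (cornerPB he g),
    mulBA he (cornerPB he z) (cornerPA he g),
    mulBM he (cornerPB he z) (cornerPM he g),
    mulAB he (cornerPA he g) (cornerPB he z),
    mulMA he (cornerPM he g) (cornerPA he z),
    mulBA he (cornerPB he g) (cornerPA he z),
    hAA _ (cornerPA he g), hcompat _ (cornerPM he g), hBB _ (cornerPB he g)]
  noncomm_ring

end Ring

section Phi
variable {R : Type*} [CommRing R] {G : Type*} [Ring G] [Algebra R G] {e : G}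
variable {n : ℕ} {φ : (Fin n → G) → G}

theorem philinAdd (hφ : IsNLieDer R φ) (x : Fin n → G) (i : Fin n) (u v : G) :
    φ (Function.update x i (u + v)) = φ (Function.update x i u) + φ (Function.update x i v) :=
  (hφ i x).1.map_add u v

theorem philinZero (hφ : IsNLieDer R φ) (x : Fin n → G) (i : Fin n) :
    φ (Function.update x i (0:G)) = 0 :=
  (hφ i x).1.map_zero

theorem philinNeg (hφ : IsNLieDer R φ) (x : Fin n → G) (i : Fin n) (u : G) :
    φ (Function.update x i (-u)) = - φ (Function.update x i u) :=
  (hφ i x).1.map_neg u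

theorem keyEM (he : e*e = e) (htri : ∀ g : G, (1-e) * g * e = 0)
    {ρ μ : G} (hμ : corner e (1-e) μ) (key : ρ = μ + brk e ρ) :
    μ = 0 ∧ corner e (1-e) ρ := by
  replace hμ : e*μ*(1-e) = μ := hμ
  simp only [brk] at key
  have hμ0 : μ = 0 := by
    have h2 : e*ρ*(1-e) = e*(μ + (e*ρ - ρ*e))*(1-e) := by conv_lhs => rw [key]
    have e1 : e*(μ + (e*ρ - ρ*e))*(1-e)
        = e*μ*(1-e) + ((e*e)*ρ*(1-e) - e*ρ*(e*(1-e))) := by noncomm_ring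
    rw [e1, he, hef he, mul_zero, sub_zero, hμ] at h2
    exact right_eq_add.mp h2
  refine ⟨hμ0, ?_⟩
  rw [hμ0, zero_add] at key
  have hee : e*ρ*e = 0 := by
    have h3 : e*ρ*e = e*(e*ρ - ρ*e)*e := by conv_lhs => rw [key]
    have e2 : e*(e*ρ - ρ*e)*e = (e*e)*ρ*e - e*ρ*(e*e) := by noncomm_ring
    rw [h3, e2, he, sub_self]
  have hffz : (1-e)*ρ*(1-e) = 0 := by
    have h3 : (1-e)*ρ*(1-e) = (1-e)*(e*ρ - ρ*e)*(1-e) := by conv_lhs => rw [key]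
    have e2 : (1-e)*(e*ρ - ρ*e)*(1-e) = ((1-e)*e)*ρ*(1-e) - (1-e)*ρ*(e*(1-e)) := by noncomm_ring
    rw [h3, e2, hfe he, hef he, mul_zero, zero_mul, zero_mul, sub_zero]
  have hp := peirce htri ρ
  rw [hee, hffz, zero_add, add_zero] at hp
  exact hp

theorem phiMkey (he : e*e = e) (htri : ∀ g : G, (1-e) * g * e = 0)
    (hφ : IsNLieDer R φ) (x : Fin n → G) (i : Fin n) {m : G} (hm : corner e (1-e) m) :
    corner e (1-e) (φ (Function.update x i m)) ∧ brk (φ (Function.update x i e)) m = 0 := by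
  have key := (hφ i x).2 e m
  have hbem : brk e m = m := by
    show e*m - m*e = m
    rw [Em he hm, mE he hm, sub_zero]
  rw [hbem] at key
  have hμ : corner e (1-e) (brk (φ (Function.update x i e)) m) :=
    brkM_corner he htri _ hm
  have r := keyEM he htri hμ key
  exact ⟨r.2, r.1⟩

theorem phiM' (he : e*e = e) (htri : ∀ g : G, (1-e) * g * e = 0)
    (hφ : IsNLieDer R φ) (x : Fin n → G) (i : Fin n) (hx : corner e (1-e) (x i)) :
    corner e (1-e) (φ x) := by
  have h := (phiMkey he htri hφ x i hx).1
  rwa [Function.update_eq_self] at h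

theorem phiE' (he : e*e = e) (htri : ∀ g : G, (1-e) * g * e = 0)
    (hφ : IsNLieDer R φ) (x : Fin n → G) (i : Fin n) (hx : x i = e)
    {m : G} (hm : corner e (1-e) m) : brk (φ x) m = 0 := by
  have h := (phiMkey he htri hφ x i hm).2
  have hu : Function.update x i e = x := by rw [← hx, Function.update_eq_self]
  rwa [hu] at h

theorem phiA (he : e*e = e) (hφ : IsNLieDer R φ) (x : Fin n → G) (i : Fin n)
    {a : G} (ha : corner e e a) :
    e * φ (Function.update x i a) * (1-e) = a * (e * φ (Function.update x i e) * (1-e)) := by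
  have key := (hφ i x).2 a e
  have h0 : brk a e = 0 := by
    show a*e - e*a = 0
    rw [aE he ha, Ea he ha, sub_self]
  rw [h0, philinZero hφ x i] at key
  simp only [brk] at key
  -- key : 0 = (w*e - e*w) + (a*ω - ω*a)
  have e1 : (0:G) = a*(φ (Function.update x i e)*(1-e)) - e*(φ (Function.update x i a))*(1-e) := by
    calc (0:G) = e*(0:G)*(1-e) := by rw [mul_zero, zero_mul]
    _ = e*((φ (Function.update x i a)*e - e*φ (Function.update x i a))
          + (a*φ (Function.update x i e) - φ (Function.update x i e)*a))*(1-e) := by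
        conv_lhs => rw [key]
    _ = (e*(φ (Function.update x i a))*(e*(1-e)) - (e*e)*(φ (Function.update x i a))*(1-e))
          + ((e*a)*(φ (Function.update x i e)*(1-e)) - e*(φ (Function.update x i e))*(a*(1-e))) := by
        noncomm_ring
    _ = _ := by
        rw [hef he, he, Ea he ha, aF he ha, mul_zero, mul_zero, zero_sub, sub_zero]
        noncomm_ring
  have e2 := (sub_eq_zero.mp e1.symm).symm
  rw [e2, mul_assoc e (φ (Function.update x i e)) (1-e),
    ← mul_assoc a e (φ (Function.update x i e) * (1-e)), aE he ha]

theorem phiB (he : e*e = e) (hφ : IsNLieDer R φ) (x : Fin n → G) (i : Fin n)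
    {b : G} (hb : corner (1-e) (1-e) b) :
    e * φ (Function.update x i b) * (1-e) = -((e * φ (Function.update x i e) * (1-e)) * b) := by
  have key := (hφ i x).2 b e
  have h0 : brk b e = 0 := by
    show b*e - e*b = 0
    rw [bE he hb, Eb he hb, sub_self]
  rw [h0, philinZero hφ x i] at key
  simp only [brk] at key
  have e1 : (0:G) = -((e*(φ (Function.update x i e))*(1-e))*b) - e*(φ (Function.update x i b))*(1-e) := by
    calc (0:G) = e*(0:G)*(1-e) := by rw [mul_zero, zero_mul]
    _ = e*((φ (Function.update x i b)*e - e*φ (Function.update x i b))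
          + (b*φ (Function.update x i e) - φ (Function.update x i e)*b))*(1-e) := by
        conv_lhs => rw [key]
    _ = (e*(φ (Function.update x i b))*(e*(1-e)) - (e*e)*(φ (Function.update x i b))*(1-e))
          + ((e*b)*(φ (Function.update x i e)*(1-e)) - (e*(φ (Function.update x i e)))*(b*(1-e))) := by
        noncomm_ring
    _ = _ := by
        rw [hef he, he, Eb he hb, bF he hb, mul_zero, zero_mul, zero_sub, zero_sub,
          mul_assoc (e * φ (Function.update x i e)) (1-e) b, Fb he hb]
        noncomm_ring
  exact (sub_eq_zero.mp e1.symm).symm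

end Phi

theorem Wform {R : Type*} [CommRing R] {G : Type*} [Ring G] [Algebra R G] {e : G}
    (he : e*e = e) (htri : ∀ g : G, (1-e) * g * e = 0)
    (hfa : ∀ a, corner e e a → (∀ m, corner e (1-e) m → a * m = 0) → a = 0)
    (hfb : ∀ b, corner (1-e) (1-e) b → (∀ m, corner e (1-e) m → m * b = 0) → b = 0)
    (h1 : H1P e) (h5 : DerInner R G)
    (W : G → G) (hWlin : IsLinearMap R W)
    (hWcor : ∀ m, corner e (1-e) m → corner e (1-e) (W m))
    (hWA : ∀ a m, corner e e a → corner e (1-e) m → W (a*m) = a * W m)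
    (hWB : ∀ b m, corner (1-e) (1-e) b → corner e (1-e) m → W (m*b) = W m * b) :
    ∃ c c', cornerCentral e c ∧ cornerCentral (1-e) c' ∧
      (∀ m, corner e (1-e) m → W m = c * m) ∧ (∀ m, corner e (1-e) m → W m = m * c') := by
  have hdlin : IsLinearMap R (fun g => W (e*g*(1-e))) := by
    constructor
    · intro u v
      show W (e*(u+v)*(1-e)) = W (e*u*(1-e)) + W (e*v*(1-e))
      rw [mul_add, add_mul, hWlin.map_add]
    · intro r u
      show W (e*(r•u)*(1-e)) = r • W (e*u*(1-e))
      rw [mul_smul_comm, smul_mul_assoc, hWlin.map_smul]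
  have hder : ∀ g h : G, W (e*(g*h)*(1-e)) = W (e*g*(1-e)) * h + g * W (e*h*(1-e)) := by
    intro g h
    have hsplit : e*(g*h)*(1-e) = (e*g*e)*(e*h*(1-e)) + (e*g*(1-e))*((1-e)*h*(1-e)) := by
      have h' : (e*g*e)*(e*h*(1-e)) + (e*g*(1-e))*((1-e)*h*(1-e))
           = e*g*((e*e)*(h*(1-e))) + e*g*(((1-e)*(1-e))*(h*(1-e))) := by noncomm_ring
      rw [h', he, hff he]
      noncomm_ring
    rw [hsplit, hWlin.map_add, hWA _ _ (cornerPA he g) (cornerPM he h),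
        hWB _ _ (cornerPB he h) (cornerPM he g)]
    have c1 : W (e*g*(1-e)) * ((1-e)*h*(1-e)) = W (e*g*(1-e)) * h :=
      (mG he htri h (hWcor _ (cornerPM he g))).symm
    have c2 : (e*g*e) * W (e*h*(1-e)) = g * W (e*h*(1-e)) :=
      (gM he htri g (hWcor _ (cornerPM he h))).symm
    rw [c1, c2]
    exact add_comm _ _
  obtain ⟨g0, hg0⟩ := h5 _ hdlin hder
  have hW0 : ∀ m, corner e (1-e) m → W m = (e*g0*e) * m - m * ((1-e)*g0*(1-e)) := by
    intro m hm
    have hWd : W m = W (e*m*(1-e)) := by rw [hm]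
    rw [hWd, hg0 m, ← gM he htri g0 hm, ← mG he htri g0 hm]
  have hZa : ∀ a, corner e e a → (e*g0*e)*a = a*(e*g0*e) := by
    intro a ha
    refine sub_eq_zero.mp (hfa _ (corner_sub (cornerAA he (cornerPA he g0) ha)
      (cornerAA he ha (cornerPA he g0))) ?_)
    intro m hm
    have h4 : (e*g0*e)*(a*m) - (a*m)*((1-e)*g0*(1-e))
        = a*((e*g0*e)*m - m*((1-e)*g0*(1-e))) := by
      rw [← hW0 _ (cornerAM he ha hm), hWA a m ha hm, hW0 m hm]
    calc ((e*g0*e)*a - a*(e*g0*e))*m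
        = ((e*g0*e)*(a*m) - (a*m)*((1-e)*g0*(1-e)))
          - (a*((e*g0*e)*m - m*((1-e)*g0*(1-e)))) := by noncomm_ring
    _ = 0 := by rw [h4, sub_self]
  have hZb : ∀ b, corner (1-e) (1-e) b → ((1-e)*g0*(1-e))*b = b*((1-e)*g0*(1-e)) := by
    intro b hb
    refine sub_eq_zero.mp (hfb _ (corner_sub (cornerBB he (cornerPB he g0) hb)
      (cornerBB he hb (cornerPB he g0))) ?_)
    intro m hm
    have h4 : (e*g0*e)*(m*b) - (m*b)*((1-e)*g0*(1-e))
        = ((e*g0*e)*m - m*((1-e)*g0*(1-e)))*b := by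
      rw [← hW0 _ (cornerMB he hm hb), hWB b m hb hm, hW0 m hm]
    calc m*(((1-e)*g0*(1-e))*b - b*((1-e)*g0*(1-e)))
        = ((e*g0*e)*(m*b) - (m*b)*((1-e)*g0*(1-e)))
          - (((e*g0*e)*m - m*((1-e)*g0*(1-e)))*b) := by noncomm_ring
    _ = 0 := by rw [h4, sub_self]
  obtain ⟨w, hwc, hw⟩ := h1.2 ((1-e)*g0*(1-e)) ⟨cornerPB he g0, hZb⟩
  obtain ⟨w', hwc', hw'⟩ := h1.1 (e*g0*e) ⟨cornerPA he g0, hZa⟩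
  refine ⟨e*g0*e - e*w*e, (1-e)*w'*(1-e) - (1-e)*g0*(1-e), ?_, ?_, ?_, ?_⟩
  · refine ⟨corner_sub (cornerPA he g0) (cornerPA he w), ?_⟩
    intro a' ha'
    rw [sub_mul (e*g0*e) (e*w*e) a', mul_sub a' (e*g0*e) (e*w*e), hZa a' ha',
      centerA he hwc ha']
  · refine ⟨corner_sub (cornerPB he w') (cornerPB he g0), ?_⟩
    intro b' hb'
    rw [sub_mul ((1-e)*w'*(1-e)) ((1-e)*g0*(1-e)) b',
      mul_sub b' ((1-e)*w'*(1-e)) ((1-e)*g0*(1-e)), hZb b' hb', centerB he hwc' hb']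
  · intro m hm
    rw [hW0 m hm, sub_mul (e*g0*e) (e*w*e) m, hw, ← centerHalf he hwc hm]
  · intro m hm
    rw [hW0 m hm, mul_sub m ((1-e)*w'*(1-e)) ((1-e)*g0*(1-e)), hw',
      centerHalf he hwc' hm]


theorem diagA {G : Type*} [Ring G] {e : G} (he : e*e = e)
    (htri : ∀ g : G, (1-e) * g * e = 0) (u v : G) :
    e*(u*v)*e = (e*u*e)*(e*v*e) := by
  have h1 : e*(u*v)*e = (e*u)*(v*e) := by noncomm_ring
  rw [h1, ge_eq htri v, mul_assoc (e*u) e (e*v*e), ← mul_assoc e (e*v) e,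
    ← mul_assoc e e v, he]

theorem diagB {G : Type*} [Ring G] {e : G} (he : e*e = e)
    (htri : ∀ g : G, (1-e) * g * e = 0) (u v : G) :
    (1-e)*(u*v)*(1-e) = ((1-e)*u*(1-e))*((1-e)*v*(1-e)) := by
  have h1 : (1-e)*(u*v)*(1-e) = ((1-e)*u)*(v*(1-e)) := by noncomm_ring
  rw [h1, fg_eq htri u, mul_assoc ((1-e)*u) (1-e) (v*(1-e)), ← mul_assoc (1-e) v (1-e),
    mul_assoc ((1-e)*u) (1-e) (1-e), hff he,
    mul_assoc ((1-e)*u) (1-e) ((1-e)*v*(1-e)), ← mul_assoc (1-e) ((1-e)*v) (1-e),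
    ← mul_assoc (1-e) (1-e) v, hff he]

theorem iterBr_corner {G : Type*} [Ring G] {e : G} (he : e*e = e)
    (htri : ∀ g : G, (1-e) * g * e = 0) {μ : G} (hμ : corner e (1-e) μ) :
    ∀ {k : ℕ} (y : Fin k → G), corner e (1-e) (iterBr y μ) := by
  intro k
  induction k with
  | zero => intro y; exact hμ
  | succ k ih => intro y; exact brkM_corner he htri (y 0) (ih (Fin.tail y))

theorem fullA {R : Type*} [CommRing R] {G : Type*} [Ring G] [Algebra R G] {e : G}
    {n : ℕ} {φ : (Fin n → G) → G}
    (he : e*e = e) (hφ : IsNLieDer R φ) (z : Fin n → G) (r : Fin n) {a : G}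
    (ha : corner e e a)
    (hza : corner e (1-e) (φ (Function.update z r a)))
    (hze : corner e (1-e) (φ (Function.update z r e))) :
    φ (Function.update z r a) = a * φ (Function.update z r e) := by
  have h := phiA he hφ z r ha
  rw [show (e * φ (Function.update z r a) * (1-e)) = φ (Function.update z r a) from hza,
    show (e * φ (Function.update z r e) * (1-e)) = φ (Function.update z r e) from hze] at h
  exact h

theorem fullB {R : Type*} [CommRing R] {G : Type*} [Ring G] [Algebra R G] {e : G}
    {n : ℕ} {φ : (Fin n → G) → G}
    (he : e*e = e) (hφ : IsNLieDer R φ) (z : Fin n → G) (r : Fin n) {b : G}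
    (hb : corner (1-e) (1-e) b)
    (hzb : corner e (1-e) (φ (Function.update z r b)))
    (hze : corner e (1-e) (φ (Function.update z r e))) :
    φ (Function.update z r b) = -(φ (Function.update z r e) * b) := by
  have h := phiB he hφ z r hb
  rw [show (e * φ (Function.update z r b) * (1-e)) = φ (Function.update z r b) from hzb,
    show (e * φ (Function.update z r e) * (1-e)) = φ (Function.update z r e) from hze] at h
  exact h

end TLA

theorem nLieDer_triangular_decomposition {R : Type*} [CommRing R]
    (htf : ∀ r : R, r + r = 0 → r = 0)
    {G : Type*} [Ring G] [Algebra R G] (e : G) (he : e * e = e)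
    (he0 : e ≠ 0) (he1 : e ≠ 1)
    (htri : ∀ g : G, (1 - e) * g * e = 0) (hf : Faithful e)
    (h1 : H1P e) (h2 : H2P e) (h5 : DerInner R G)
    (n : ℕ) (hn : 3 ≤ n)
    (φ : (Fin n → G) → G) (hφ : IsNLieDer R φ) :
    (∀ u v : G, brk (brk u v) (e * φ (fun _ => e) * (1 - e)) = 0) ∧
    ∀ x : Fin n → G, central (φ x - iterBr x (e * φ (fun _ => e) * (1 - e))) := by
  obtain ⟨hfa, hfb⟩ := hf
  set X0 := e * φ (fun _ => e) * (1 - e) with hX0d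
  have hX0c : corner e (1-e) X0 := TLA.cornerPM he _
  have hpick : ∀ j : Fin n, ∃ p q : Fin n, p ≠ q ∧ p ≠ j ∧ q ≠ j := by
    intro j
    by_cases h0 : (j : ℕ) = 0
    · exact ⟨⟨1, by omega⟩, ⟨2, by omega⟩, by simp [Fin.ext_iff], by simp [Fin.ext_iff, h0],
        by simp [Fin.ext_iff, h0]⟩
    · by_cases h1' : (j : ℕ) = 1
      · exact ⟨⟨0, by omega⟩, ⟨2, by omega⟩, by simp [Fin.ext_iff], by simp [Fin.ext_iff, h1'],
          by simp [Fin.ext_iff, h1']⟩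
      · exact ⟨⟨0, by omega⟩, ⟨1, by omega⟩, by simp [Fin.ext_iff],
          by simp [Fin.ext_iff]; omega, by simp [Fin.ext_iff]; omega⟩
  obtain ⟨i0, i1, i01, hi00, hi10⟩ := hpick ⟨0, by omega⟩
  -- We only need two distinct indices somewhere; but for claimA use explicit 0,1:
  clear i01 hi00 hi10
  have upd_e : ∀ (x : Fin n → G) (r : Fin n), x r = e → Function.update x r e = x := by
    intro x r h
    funext k
    by_cases hk : k = r
    · subst hk; rw [Function.update_self]; exact h.symm
    · rw [Function.update_of_ne hk]
  have hconst_upd : ∀ (i : Fin n), Function.update (fun _ : Fin n => e) i e = fun _ => e :=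
    fun i => upd_e _ i rfl
  have claimA : ∀ {a a' : G}, corner e e a → corner e e a' → brk a a' * X0 = 0 := by
    intro a a' ha ha'
    obtain ⟨p, q, hpq, -, -⟩ := hpick ⟨0, by omega⟩
    have base : ∀ {u : G}, corner e e u →
        e * φ (Function.update (fun _ => e) p u) * (1-e) = u * X0 := by
      intro u hu
      rw [TLA.phiA he hφ _ p hu, hconst_upd p, hX0d]
    have base2 : ∀ {u : G}, corner e e u →
        e * φ (Function.update (fun _ => e) q u) * (1-e) = u * X0 := by
      intro u hu
      rw [TLA.phiA he hφ _ q hu, hconst_upd q, hX0d]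
    have t1 : e * φ (Function.update (Function.update (fun _ => e) p a) q a') * (1-e)
        = a' * (a * X0) := by
      rw [TLA.phiA he hφ _ q ha']
      have hu : Function.update (Function.update (fun _ => e) p a) q e
          = Function.update (fun _ => e) p a :=
        upd_e _ q (Function.update_of_ne (Ne.symm hpq) _ _)
      rw [hu, base ha]
    have t2 : e * φ (Function.update (Function.update (fun _ => e) q a') p a) * (1-e)
        = a * (a' * X0) := by
      rw [TLA.phiA he hφ _ p ha]
      have hu : Function.update (Function.update (fun _ => e) q a') p e
          = Function.update (fun _ => e) q a' :=
        upd_e _ p (Function.update_of_ne hpq _ _)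
      rw [hu, base2 ha']
    have hcomm : a' * (a * X0) = a * (a' * X0) := by
      rw [← t1, Function.update_comm hpq, t2]
    show (a * a' - a' * a) * X0 = 0
    rw [sub_mul, mul_assoc, mul_assoc, hcomm, sub_self]
  have claimB : ∀ {b b' : G}, corner (1-e) (1-e) b → corner (1-e) (1-e) b' →
      X0 * brk b b' = 0 := by
    intro b b' hb hb'
    obtain ⟨p, q, hpq, -, -⟩ := hpick ⟨0, by omega⟩
    have base : ∀ {u : G}, corner (1-e) (1-e) u →
        e * φ (Function.update (fun _ => e) p u) * (1-e) = -(X0 * u) := by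
      intro u hu
      rw [TLA.phiB he hφ _ p hu, hconst_upd p, hX0d]
    have base2 : ∀ {u : G}, corner (1-e) (1-e) u →
        e * φ (Function.update (fun _ => e) q u) * (1-e) = -(X0 * u) := by
      intro u hu
      rw [TLA.phiB he hφ _ q hu, hconst_upd q, hX0d]
    have t1 : e * φ (Function.update (Function.update (fun _ => e) p b) q b') * (1-e)
        = (X0 * b) * b' := by
      rw [TLA.phiB he hφ _ q hb']
      have hu : Function.update (Function.update (fun _ => e) p b) q e
          = Function.update (fun _ => e) p b :=
        upd_e _ q (Function.update_of_ne (Ne.symm hpq) _ _)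
      rw [hu, base hb, neg_mul, neg_neg]
    have t2 : e * φ (Function.update (Function.update (fun _ => e) q b') p b) * (1-e)
        = (X0 * b') * b := by
      rw [TLA.phiB he hφ _ p hb]
      have hu : Function.update (Function.update (fun _ => e) q b') p e
          = Function.update (fun _ => e) q b' :=
        upd_e _ p (Function.update_of_ne hpq _ _)
      rw [hu, base2 hb', neg_mul, neg_neg]
    have hcomm : (X0 * b) * b' = (X0 * b') * b := by
      rw [← t1, Function.update_comm hpq, t2]
    show X0 * (b * b' - b' * b) = 0
    rw [mul_sub X0 (b*b') (b'*b), ← mul_assoc, ← mul_assoc, hcomm, sub_self]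
  have part1 : ∀ u v : G, brk (brk u v) X0 = 0 := by
    intro u v
    have h := TLA.brk_gM he htri (brk u v) hX0c
    have hdA : e * (brk u v) * e = brk (e*u*e) (e*v*e) := by
      show e*(u*v - v*u)*e = (e*u*e)*(e*v*e) - (e*v*e)*(e*u*e)
      have hp : e*(u*v - v*u)*e = e*(u*v)*e - e*(v*u)*e := by noncomm_ring
      rw [hp, TLA.diagA he htri u v, TLA.diagA he htri v u]
    have hdB : (1-e) * (brk u v) * (1-e) = brk ((1-e)*u*(1-e)) ((1-e)*v*(1-e)) := by
      show (1-e)*(u*v - v*u)*(1-e) = _ - _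
      have hp : (1-e)*(u*v - v*u)*(1-e) = (1-e)*(u*v)*(1-e) - (1-e)*(v*u)*(1-e) := by
        noncomm_ring
      rw [hp, TLA.diagB he htri u v, TLA.diagB he htri v u]
    rw [h, hdA, hdB, claimA (TLA.cornerPA he u) (TLA.cornerPA he v),
      claimB (TLA.cornerPB he u) (TLA.cornerPB he v)]
    exact sub_self 0
  refine ⟨part1, ?_⟩
  have WFgen : ∀ (x : Fin n → G) (i j : Fin n), i ≠ j → corner e (1-e) (x i) →
      ∃ c c', cornerCentral e c ∧ cornerCentral (1-e) c' ∧
        (∀ m, corner e (1-e) m → φ (Function.update x j m) = c * m) ∧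
        (∀ m, corner e (1-e) m → φ (Function.update x j m) = m * c') := by
    intro x i j hij hxi
    have hWcor : ∀ m, corner e (1-e) m → corner e (1-e) (φ (Function.update x j m)) :=
      fun m hm => (TLA.phiMkey he htri hφ x j hm).1
    have hWA : ∀ a m, corner e e a → corner e (1-e) m →
        φ (Function.update x j (a*m)) = a * φ (Function.update x j m) := by
      intro a m ha hm
      have key := (hφ j x).2 a m
      have hbam : brk a m = a*m := by
        show a*m - m*a = a*m
        rw [TLA.mulMA he hm ha, sub_zero]
      rw [hbam] at key
      have hMa : corner e (1-e) (φ (Function.update x j a)) := by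
        apply TLA.phiM' he htri hφ _ i
        rw [Function.update_of_ne hij]
        exact hxi
      have hz1 : brk (φ (Function.update x j a)) m = 0 := by
        show _ * m - m * _ = 0
        rw [TLA.mulMM he hMa hm, TLA.mulMM he hm hMa, sub_self]
      have hz2 : brk a (φ (Function.update x j m)) = a * φ (Function.update x j m) := by
        show a * _ - _ * a = _
        rw [TLA.mulMA he (hWcor m hm) ha, sub_zero]
      rw [key, hz1, hz2, zero_add]
    have hWB : ∀ b m, corner (1-e) (1-e) b → corner e (1-e) m →
        φ (Function.update x j (m*b)) = φ (Function.update x j m) * b := by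
      intro b m hb hm
      have key := (hφ j x).2 m b
      have hbmb : brk m b = m*b := by
        show m*b - b*m = m*b
        rw [TLA.mulBM he hb hm, sub_zero]
      rw [hbmb] at key
      have hMb : corner e (1-e) (φ (Function.update x j b)) := by
        apply TLA.phiM' he htri hφ _ i
        rw [Function.update_of_ne hij]
        exact hxi
      have hz2 : brk m (φ (Function.update x j b)) = 0 := by
        show m * _ - _ * m = 0
        rw [TLA.mulMM he hm hMb, TLA.mulMM he hMb hm, sub_self]
      have hz1 : brk (φ (Function.update x j m)) b = φ (Function.update x j m) * b := by
        show _ * b - b * _ = _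
        rw [TLA.mulBM he hb (hWcor m hm), sub_zero]
      rw [key, hz1, hz2, add_zero]
    obtain ⟨c, c', hc1, hc2, hc3, hc4⟩ := TLA.Wform he htri hfa hfb h1 h5
      (fun y => φ (Function.update x j y)) (hφ j x).1 hWcor hWA hWB
    exact ⟨c, c', hc1, hc2, fun m hm => hc3 m hm, fun m hm => hc4 m hm⟩
  have keyrelA : ∀ (x : Fin n → G) (i j : Fin n), i ≠ j → corner e (1-e) (x i) →
      ∀ {a : G}, corner e e a → ∀ m, corner e (1-e) m →
      φ (Function.update (Function.update x i (a * x i)) j m)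
        = a * φ (Function.update x j m) := by
    intro x i j hij hxi a ha m hm
    have hcm : Function.update (Function.update x i (a * x i)) j m
        = Function.update (Function.update x j m) i (a * x i) :=
      Function.update_comm hij _ _ _
    rw [hcm]
    have key := (hφ i (Function.update x j m)).2 a (x i)
    have hbax : brk a (x i) = a * x i := by
      show a * x i - x i * a = a * x i
      rw [TLA.mulMA he hxi ha, sub_zero]
    rw [hbax] at key
    have hzj : corner e (1-e) (φ (Function.update x j m)) :=
      (TLA.phiMkey he htri hφ x j hm).1
    have hza : corner e (1-e) (φ (Function.update (Function.update x j m) i a)) := by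
      apply TLA.phiM' he htri hφ _ j
      rw [Function.update_of_ne (Ne.symm hij), Function.update_self]
      exact hm
    have hz1 : brk (φ (Function.update (Function.update x j m) i a)) (x i) = 0 := by
      show _ * x i - x i * _ = 0
      rw [TLA.mulMM he hza hxi, TLA.mulMM he hxi hza, sub_self]
    have hz2 : Function.update (Function.update x j m) i (x i)
        = Function.update x j m := by
      have hzi : (Function.update x j m) i = x i := Function.update_of_ne hij _ _
      rw [← hzi, Function.update_eq_self]
    have hz3 : brk a (φ (Function.update x j m)) = a * φ (Function.update x j m) := by
      show a * _ - _ * a = _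
      rw [TLA.mulMA he hzj ha, sub_zero]
    rw [key, hz1, hz2, hz3, zero_add]
  have keyrelB : ∀ (x : Fin n → G) (i j : Fin n), i ≠ j → corner e (1-e) (x i) →
      ∀ {b : G}, corner (1-e) (1-e) b → ∀ m, corner e (1-e) m →
      φ (Function.update (Function.update x i (x i * b)) j m)
        = φ (Function.update x j m) * b := by
    intro x i j hij hxi b hb m hm
    have hcm : Function.update (Function.update x i (x i * b)) j m
        = Function.update (Function.update x j m) i (x i * b) :=
      Function.update_comm hij _ _ _
    rw [hcm]
    have key := (hφ i (Function.update x j m)).2 (x i) b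
    have hbax : brk (x i) b = x i * b := by
      show x i * b - b * x i = x i * b
      rw [TLA.mulBM he hb hxi, sub_zero]
    rw [hbax] at key
    have hzj : corner e (1-e) (φ (Function.update x j m)) :=
      (TLA.phiMkey he htri hφ x j hm).1
    have hzb : corner e (1-e) (φ (Function.update (Function.update x j m) i b)) := by
      apply TLA.phiM' he htri hφ _ j
      rw [Function.update_of_ne (Ne.symm hij), Function.update_self]
      exact hm
    have hz2' : brk (x i) (φ (Function.update (Function.update x j m) i b)) = 0 := by
      show x i * _ - _ * x i = 0
      rw [TLA.mulMM he hxi hzb, TLA.mulMM he hzb hxi, sub_self]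
    have hz2 : Function.update (Function.update x j m) i (x i)
        = Function.update x j m := by
      have hzi : (Function.update x j m) i = x i := Function.update_of_ne hij _ _
      rw [← hzi, Function.update_eq_self]
    have hz1 : brk (φ (Function.update x j m)) b = φ (Function.update x j m) * b := by
      show _ * b - b * _ = _
      rw [TLA.mulBM he hb hzj, sub_zero]
    rw [key, hz2, hz1, hz2', add_zero]
  have Z2 : ∀ (x : Fin n → G) (i j : Fin n), i ≠ j → corner e (1-e) (x i) →
      corner e (1-e) (x j) → φ x = 0 := by
    intro x i j hij hxi hxj
    obtain ⟨c, c', hcc, hcc', hWc, hWc'⟩ := WFgen x i j hij hxi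
    have hx : φ x = φ (Function.update x j (x j)) := by rw [Function.update_eq_self]
    rcases h2 with hA2 | hB2
    · have hc0 : c = 0 := by
        by_contra hc
        refine hA2 ⟨c, hc, hcc, ?_⟩
        intro a ha
        obtain ⟨ca, ca', hcca, _, hWca, _⟩ := WFgen (Function.update x i (a * x i)) i j hij
          (by rw [Function.update_self]; exact TLA.cornerAM he ha hxi)
        have hac : a * c = ca := by
          refine sub_eq_zero.mp (hfa _ (TLA.corner_sub (TLA.cornerAA he ha hcc.1) hcca.1) ?_)
          intro m hm
          rw [sub_mul, mul_assoc, ← hWc m hm, ← keyrelA x i j hij hxi ha m hm,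
            hWca m hm, sub_self]
        rw [hac]
        exact hcca
      rw [hx, hWc (x j) hxj, hc0, zero_mul]
    · have hc0 : c' = 0 := by
        by_contra hc
        refine hB2 ⟨c', hc, hcc', ?_⟩
        intro b hb
        obtain ⟨cb, cb', _, hccb', _, hWcb'⟩ := WFgen (Function.update x i (x i * b)) i j hij
          (by rw [Function.update_self]; exact TLA.cornerMB he hxi hb)
        have hbc : c' * b = cb' := by
          refine sub_eq_zero.mp (hfb _ (TLA.corner_sub (TLA.cornerBB he hcc'.1 hb) hccb'.1) ?_)
          intro m hm
          rw [mul_sub, ← mul_assoc, ← hWc' m hm, ← keyrelB x i j hij hxi hb m hm,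
            hWcb' m hm, sub_self]
        have hbc2 : b * c' = cb' := by rw [← hbc, hcc'.2 b hb]
        rw [hbc2]
        exact hccb'
      rw [hx, hWc' (x j) hxj, hc0, mul_zero]
  have V0 : ∀ (x : Fin n → G) (j : Fin n), corner e (1-e) (x j) →
      (∀ i, i ≠ j → x i = e) → φ x = 0 := by
    intro x j hxj hrest
    obtain ⟨p, q, hpq, hpj, hqj⟩ := hpick j
    have hWcor : ∀ m, corner e (1-e) m → corner e (1-e) (φ (Function.update x j m)) :=
      fun m hm => (TLA.phiMkey he htri hφ x j hm).1
    have hWA : ∀ a m, corner e e a → corner e (1-e) m →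
        φ (Function.update x j (a*m)) = a * φ (Function.update x j m) := by
      intro a m ha hm
      have key := (hφ j x).2 a m
      have hbam : brk a m = a*m := by
        show a*m - m*a = a*m
        rw [TLA.mulMA he hm ha, sub_zero]
      rw [hbam] at key
      have hz1 : brk (φ (Function.update x j a)) m = 0 :=
        TLA.phiE' he htri hφ _ p
          (by rw [Function.update_of_ne hpj]; exact hrest p hpj) hm
      have hz2 : brk a (φ (Function.update x j m)) = a * φ (Function.update x j m) := by
        show a * _ - _ * a = _
        rw [TLA.mulMA he (hWcor m hm) ha, sub_zero]
      rw [key, hz1, hz2, zero_add]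
    have hWB : ∀ b m, corner (1-e) (1-e) b → corner e (1-e) m →
        φ (Function.update x j (m*b)) = φ (Function.update x j m) * b := by
      intro b m hb hm
      have key := (hφ j x).2 m b
      have hbmb : brk m b = m*b := by
        show m*b - b*m = m*b
        rw [TLA.mulBM he hb hm, sub_zero]
      rw [hbmb] at key
      have hz2' : brk (φ (Function.update x j b)) m = 0 :=
        TLA.phiE' he htri hφ _ p
          (by rw [Function.update_of_ne hpj]; exact hrest p hpj) hm
      have hz2 : brk m (φ (Function.update x j b)) = 0 := by
        have hflip : brk m (φ (Function.update x j b))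
            = -(brk (φ (Function.update x j b)) m) := by
          show m * _ - _ * m = -(_ * m - m * _)
          rw [neg_sub]
        rw [hflip, hz2', neg_zero]
      have hz1 : brk (φ (Function.update x j m)) b = φ (Function.update x j m) * b := by
        show _ * b - b * _ = _
        rw [TLA.mulBM he hb (hWcor m hm), sub_zero]
      rw [key, hz1, hz2, add_zero]
    obtain ⟨c, c', hcc, hcc', hWc, hWc'⟩ := TLA.Wform he htri hfa hfb h1 h5
      (fun y => φ (Function.update x j y)) (hφ j x).1 hWcor hWA hWB
    have hx : φ x = φ (Function.update x j (x j)) := by rw [Function.update_eq_self]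
    -- bracket annihilation, A side
    have hbrA : ∀ {a a' : G}, corner e e a → corner e e a' → ∀ m, corner e (1-e) m →
        brk a a' * φ (Function.update x j m) = 0 := by
      intro a a' ha ha' m hm
      have hzp : (Function.update x j m) p = e := by
        rw [Function.update_of_ne hpj]; exact hrest p hpj
      have hzq : (Function.update x j m) q = e := by
        rw [Function.update_of_ne hqj]; exact hrest q hqj
      have c0 : corner e (1-e) (φ (Function.update x j m)) := hWcor m hm
      have c1 : ∀ {u : G}, corner e (1-e)
          (φ (Function.update (Function.update x j m) p u)) := by
        intro u
        apply TLA.phiM' he htri hφ _ j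
        rw [Function.update_of_ne (Ne.symm hpj), Function.update_self]
        exact hm
      have c2 : ∀ {u u' : G}, corner e (1-e)
          (φ (Function.update (Function.update (Function.update x j m) p u) q u')) := by
        intro u u'
        apply TLA.phiM' he htri hφ _ j
        rw [Function.update_of_ne (Ne.symm hqj), Function.update_of_ne (Ne.symm hpj),
          Function.update_self]
        exact hm
      have c1' : ∀ {u : G}, corner e (1-e)
          (φ (Function.update (Function.update x j m) q u)) := by
        intro u
        apply TLA.phiM' he htri hφ _ j
        rw [Function.update_of_ne (Ne.symm hqj), Function.update_self]
        exact hm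
      have hupp : Function.update (Function.update x j m) p e = Function.update x j m :=
        upd_e _ p hzp
      have hupq : Function.update (Function.update x j m) q e = Function.update x j m :=
        upd_e _ q hzq
      have s1 : φ (Function.update (Function.update x j m) p a)
          = a * φ (Function.update x j m) := by
        have h' := TLA.fullA he hφ (Function.update x j m) p ha c1 (by rw [hupp]; exact c0)
        rwa [hupp] at h'
      have s1' : φ (Function.update (Function.update x j m) q a')
          = a' * φ (Function.update x j m) := by
        have h' := TLA.fullA he hφ (Function.update x j m) q ha' c1' (by rw [hupq]; exact c0)
        rwa [hupq] at h'
      have s2 : φ (Function.update (Function.update (Function.update x j m) p a) q a')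
          = a' * (a * φ (Function.update x j m)) := by
        have hq' : Function.update (Function.update (Function.update x j m) p a) q e
            = Function.update (Function.update x j m) p a :=
          upd_e _ q (by rw [Function.update_of_ne (Ne.symm hpq)]; exact hzq)
        have h' := TLA.fullA he hφ (Function.update (Function.update x j m) p a) q ha'
          c2 (by rw [hq']; exact c1)
        rw [hq', s1] at h'
        exact h'
      have s2' : φ (Function.update (Function.update (Function.update x j m) q a') p a)
          = a * (a' * φ (Function.update x j m)) := by
        have hp' : Function.update (Function.update (Function.update x j m) q a') p e
            = Function.update (Function.update x j m) q a' :=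
          upd_e _ p (by rw [Function.update_of_ne hpq]; exact hzp)
        have h' := TLA.fullA he hφ (Function.update (Function.update x j m) q a') p ha
          (by rw [Function.update_comm (Ne.symm hpq)]; exact c2) (by rw [hp']; exact c1')
        rw [hp', s1'] at h'
        exact h'
      have hcomm : a' * (a * φ (Function.update x j m))
          = a * (a' * φ (Function.update x j m)) := by
        rw [← s2, Function.update_comm hpq, s2']
      show (a * a' - a' * a) * φ (Function.update x j m) = 0
      rw [sub_mul, mul_assoc, mul_assoc, hcomm, sub_self]
    have hbrB : ∀ {b b' : G}, corner (1-e) (1-e) b → corner (1-e) (1-e) b' →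
        ∀ m, corner e (1-e) m →
        φ (Function.update x j m) * brk b b' = 0 := by
      intro b b' hb hb' m hm
      have hzp : (Function.update x j m) p = e := by
        rw [Function.update_of_ne hpj]; exact hrest p hpj
      have hzq : (Function.update x j m) q = e := by
        rw [Function.update_of_ne hqj]; exact hrest q hqj
      have c0 : corner e (1-e) (φ (Function.update x j m)) := hWcor m hm
      have c1 : ∀ {u : G}, corner e (1-e)
          (φ (Function.update (Function.update x j m) p u)) := by
        intro u
        apply TLA.phiM' he htri hφ _ j
        rw [Function.update_of_ne (Ne.symm hpj), Function.update_self]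
        exact hm
      have c2 : ∀ {u u' : G}, corner e (1-e)
          (φ (Function.update (Function.update (Function.update x j m) p u) q u')) := by
        intro u u'
        apply TLA.phiM' he htri hφ _ j
        rw [Function.update_of_ne (Ne.symm hqj), Function.update_of_ne (Ne.symm hpj),
          Function.update_self]
        exact hm
      have c1' : ∀ {u : G}, corner e (1-e)
          (φ (Function.update (Function.update x j m) q u)) := by
        intro u
        apply TLA.phiM' he htri hφ _ j
        rw [Function.update_of_ne (Ne.symm hqj), Function.update_self]
        exact hm
      have hupp : Function.update (Function.update x j m) p e = Function.update x j m :=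
        upd_e _ p hzp
      have hupq : Function.update (Function.update x j m) q e = Function.update x j m :=
        upd_e _ q hzq
      have s1 : φ (Function.update (Function.update x j m) p b)
          = -(φ (Function.update x j m) * b) := by
        have h' := TLA.fullB he hφ (Function.update x j m) p hb c1 (by rw [hupp]; exact c0)
        rwa [hupp] at h'
      have s1' : φ (Function.update (Function.update x j m) q b')
          = -(φ (Function.update x j m) * b') := by
        have h' := TLA.fullB he hφ (Function.update x j m) q hb' c1' (by rw [hupq]; exact c0)
        rwa [hupq] at h'
      have s2 : φ (Function.update (Function.update (Function.update x j m) p b) q b')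
          = (φ (Function.update x j m) * b) * b' := by
        have hq' : Function.update (Function.update (Function.update x j m) p b) q e
            = Function.update (Function.update x j m) p b :=
          upd_e _ q (by rw [Function.update_of_ne (Ne.symm hpq)]; exact hzq)
        have h' := TLA.fullB he hφ (Function.update (Function.update x j m) p b) q hb'
          c2 (by rw [hq']; exact c1)
        rw [hq', s1, neg_mul, neg_neg] at h'
        exact h'
      have s2' : φ (Function.update (Function.update (Function.update x j m) q b') p b)
          = (φ (Function.update x j m) * b') * b := by
        have hp' : Function.update (Function.update (Function.update x j m) q b') p e
            = Function.update (Function.update x j m) q b' :=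
          upd_e _ p (by rw [Function.update_of_ne hpq]; exact hzp)
        have h' := TLA.fullB he hφ (Function.update (Function.update x j m) q b') p hb
          (by rw [Function.update_comm (Ne.symm hpq)]; exact c2) (by rw [hp']; exact c1')
        rw [hp', s1', neg_mul, neg_neg] at h'
        exact h'
      have hcomm : (φ (Function.update x j m) * b) * b'
          = (φ (Function.update x j m) * b') * b := by
        rw [← s2, Function.update_comm hpq, s2']
      show φ (Function.update x j m) * (b * b' - b' * b) = 0
      rw [mul_sub (φ (Function.update x j m)) (b*b') (b'*b), ← mul_assoc, ← mul_assoc,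
        hcomm, sub_self]
    rcases h2 with hA2 | hB2
    · have hc0 : c = 0 := by
        by_contra hc
        refine hA2 ⟨c, hc, hcc, ?_⟩
        intro a ha
        refine ⟨TLA.cornerAA he ha hcc.1, ?_⟩
        intro a' ha'
        have hcbr : c * brk a a' = 0 := by
          refine hfa _ (TLA.cornerAA he hcc.1 (TLA.corner_brk_diag he ha ha')) ?_
          intro m hm
          have h5' := hbrA ha ha' m hm
          rw [hWc m hm] at h5'
          rw [hcc.2 _ (TLA.corner_brk_diag he ha ha'), mul_assoc]
          exact h5'
        calc (a*c)*a' = (c*a)*a' := by rw [hcc.2 a ha]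
        _ = c*(a*a') := by rw [mul_assoc]
        _ = c*(a'*a) := by
            refine sub_eq_zero.mp ?_
            have hms : c*(a*a') - c*(a'*a) = c * brk a a' := by
              rw [← mul_sub]; rfl
            rw [hms, hcbr]
        _ = (c*a')*a := by rw [mul_assoc]
        _ = (a'*c)*a := by rw [hcc.2 a' ha']
        _ = a'*(c*a) := by rw [mul_assoc]
        _ = a'*(a*c) := by rw [hcc.2 a ha]
      have hfin := hWc (x j) hxj
      rw [Function.update_eq_self] at hfin
      rw [hfin, hc0, zero_mul]
    · have hc0 : c' = 0 := by
        by_contra hc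
        refine hB2 ⟨c', hc, hcc', ?_⟩
        intro b hb
        refine ⟨TLA.cornerBB he hb hcc'.1, ?_⟩
        intro b' hb'
        have hcbr : c' * brk b b' = 0 := by
          refine hfb _ (TLA.cornerBB he hcc'.1 (TLA.corner_brk_diagB he hb hb')) ?_
          intro m hm
          have h5' := hbrB hb hb' m hm
          rw [hWc' m hm] at h5'
          rw [← mul_assoc]
          exact h5'
        calc (b*c')*b' = (c'*b)*b' := by rw [hcc'.2 b hb]
        _ = c'*(b*b') := by rw [mul_assoc]
        _ = c'*(b'*b) := by
            refine sub_eq_zero.mp ?_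
            have hms : c'*(b*b') - c'*(b'*b) = c' * brk b b' := by
              rw [← mul_sub]; rfl
            rw [hms, hcbr]
        _ = (c'*b')*b := by rw [mul_assoc]
        _ = (b'*c')*b := by rw [hcc'.2 b' hb']
        _ = b'*(c'*b) := by rw [mul_assoc]
        _ = b'*(b*c') := by rw [hcc'.2 b hb]
      have hfin := hWc' (x j) hxj
      rw [Function.update_eq_self] at hfin
      rw [hfin, hc0, mul_zero]
  have decomp : ∀ (x : Fin n → G) (i : Fin n),
      φ x = φ (Function.update x i (e*(x i)*e)) + φ (Function.update x i (e*(x i)*(1-e)))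
        + φ (Function.update x i ((1-e)*(x i)*(1-e))) := by
    intro x i
    conv_lhs => rw [← Function.update_eq_self i x, ← TLA.peirce htri (x i)]
    rw [TLA.philinAdd hφ x i, TLA.philinAdd hφ x i]
  have M0 : ∀ (x : Fin n → G) (j : Fin n), corner e (1-e) (x j) → φ x = 0 := by
    have aux : ∀ (S : Finset (Fin n)) (x : Fin n → G) (j : Fin n), corner e (1-e) (x j) →
        (∀ i, i ∉ S → i ≠ j → x i = e) → φ x = 0 := by
      intro S
      induction S using Finset.induction_on with
      | empty =>
        intro x j hxj hrest
        exact V0 x j hxj (fun i hij => hrest i (Finset.notMem_empty i) hij)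
      | @insert i S hiS ih =>
        intro x j hxj hrest
        by_cases hij : i = j
        · subst hij
          refine ih x i hxj (fun i' hi' hij' => hrest i' ?_ hij')
          simp only [Finset.mem_insert, not_or]
          exact ⟨hij', hi'⟩
        · have hrec : φ (Function.update x i e) = 0 := by
            refine ih _ j ?_ ?_
            · rw [Function.update_of_ne (Ne.symm hij)]; exact hxj
            · intro i' hi' hij'
              by_cases hii : i' = i
              · subst hii; rw [Function.update_self]
              · rw [Function.update_of_ne hii]
                refine hrest i' ?_ hij'
                simp only [Finset.mem_insert, not_or]
                exact ⟨hii, hi'⟩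
          have hMval : corner e (1-e) (φ (Function.update x i e)) := by
            apply TLA.phiM' he htri hφ _ j
            rw [Function.update_of_ne (Ne.symm hij)]; exact hxj
          have hMa : corner e (1-e) (φ (Function.update x i (e*(x i)*e))) := by
            apply TLA.phiM' he htri hφ _ j
            rw [Function.update_of_ne (Ne.symm hij)]; exact hxj
          have hMb : corner e (1-e) (φ (Function.update x i ((1-e)*(x i)*(1-e)))) := by
            apply TLA.phiM' he htri hφ _ j
            rw [Function.update_of_ne (Ne.symm hij)]; exact hxj
          have hterm1 : φ (Function.update x i (e*(x i)*e)) = 0 := by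
            rw [TLA.fullA he hφ x i (TLA.cornerPA he (x i)) hMa hMval, hrec, mul_zero]
          have hterm2 : φ (Function.update x i (e*(x i)*(1-e))) = 0 := by
            refine Z2 _ i j hij ?_ ?_
            · rw [Function.update_self]; exact TLA.cornerPM he (x i)
            · rw [Function.update_of_ne (Ne.symm hij)]; exact hxj
          have hterm3 : φ (Function.update x i ((1-e)*(x i)*(1-e))) = 0 := by
            rw [TLA.fullB he hφ x i (TLA.cornerPB he (x i)) hMb hMval, hrec, zero_mul,
              neg_zero]
          rw [decomp x i, hterm1, hterm2, hterm3, add_zero, add_zero]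
    intro x j hxj
    exact aux Finset.univ x j hxj (fun i hi _ => absurd (Finset.mem_univ i) hi)
  have compat : ∀ (x : Fin n → G) {m : G}, corner e (1-e) m → brk (φ x) m = 0 := by
    intro x m hm
    have i0' : Fin n := ⟨0, by omega⟩
    have hbrk0 : ∀ u : G, brk u (0:G) = 0 := by
      intro u
      show u*0 - 0*u = 0
      rw [mul_zero, zero_mul, sub_zero]
    have key1 := (hφ ⟨0, by omega⟩ x).2 (e*(x ⟨0, by omega⟩)*e) m
    have hbam : brk (e*(x ⟨0, by omega⟩)*e) m = (e*(x ⟨0, by omega⟩)*e) * m := by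
      show _ - m * _ = _
      rw [TLA.mulMA he hm (TLA.cornerPA he _), sub_zero]
    rw [hbam] at key1
    have hz1 : φ (Function.update x ⟨0, by omega⟩ ((e*(x ⟨0, by omega⟩)*e) * m)) = 0 :=
      M0 _ ⟨0, by omega⟩
        (by rw [Function.update_self]; exact TLA.cornerAM he (TLA.cornerPA he _) hm)
    have hz2 : φ (Function.update x ⟨0, by omega⟩ m) = 0 :=
      M0 _ ⟨0, by omega⟩ (by rw [Function.update_self]; exact hm)
    rw [hz1, hz2, hbrk0, add_zero] at key1
    have key2 := (hφ ⟨0, by omega⟩ x).2 ((1-e)*(x ⟨0, by omega⟩)*(1-e)) m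
    have hbbm : brk ((1-e)*(x ⟨0, by omega⟩)*(1-e)) m
        = -(m * ((1-e)*(x ⟨0, by omega⟩)*(1-e))) := by
      show _ * m - _ = _
      rw [TLA.mulBM he (TLA.cornerPB he _) hm, zero_sub]
    rw [hbbm, TLA.philinNeg hφ x _] at key2
    have hz3 : φ (Function.update x ⟨0, by omega⟩ (m * ((1-e)*(x ⟨0, by omega⟩)*(1-e)))) = 0 :=
      M0 _ ⟨0, by omega⟩
        (by rw [Function.update_self]; exact TLA.cornerMB he hm (TLA.cornerPB he _))
    rw [hz3, hz2, hbrk0, add_zero, neg_zero] at key2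
    have hMterm : φ (Function.update x ⟨0, by omega⟩ (e*(x ⟨0, by omega⟩)*(1-e))) = 0 :=
      M0 _ ⟨0, by omega⟩ (by rw [Function.update_self]; exact TLA.cornerPM he _)
    have expand : brk (φ (Function.update x ⟨0, by omega⟩ (e*(x ⟨0, by omega⟩)*e))
          + φ (Function.update x ⟨0, by omega⟩ (e*(x ⟨0, by omega⟩)*(1-e)))
          + φ (Function.update x ⟨0, by omega⟩ ((1-e)*(x ⟨0, by omega⟩)*(1-e)))) m
        = brk (φ (Function.update x ⟨0, by omega⟩ (e*(x ⟨0, by omega⟩)*e))) m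
          + brk (φ (Function.update x ⟨0, by omega⟩ (e*(x ⟨0, by omega⟩)*(1-e)))) m
          + brk (φ (Function.update x ⟨0, by omega⟩ ((1-e)*(x ⟨0, by omega⟩)*(1-e)))) m := by
      simp only [brk]
      noncomm_ring
    rw [decomp x ⟨0, by omega⟩, expand, ← key1, ← key2, hMterm]
    have hbrk0' : brk (0:G) m = 0 := by
      show 0*m - m*0 = 0
      rw [mul_zero, zero_mul, sub_zero]
    rw [hbrk0', add_zero, add_zero]
  have mpart : ∀ x : Fin n → G, e * φ x * (1-e) = iterBr x X0 := by
    have aux : ∀ (k : ℕ) (hk : k ≤ n) (x : Fin n → G), (∀ i : Fin n, (i:ℕ) < n - k → x i = e) →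
        e * φ x * (1-e)
          = iterBr (fun p : Fin k => x ⟨n - k + (p:ℕ), by have := p.isLt; omega⟩) X0 := by
      intro k
      induction k with
      | zero =>
        intro hk x hx
        have hxe : x = fun _ => e := by
          funext i
          exact hx i (by have := i.isLt; omega)
        rw [hxe]
        exact hX0d.symm
      | succ k ihk =>
        intro hk x hx
        have hkn : k ≤ n := by omega
        have hj : n - k - 1 < n := by omega
        have hx' : ∀ i : Fin n, (i:ℕ) < n - k → (Function.update x ⟨n - k - 1, hj⟩ e) i = e := by
          intro i hi
          by_cases hii : i = ⟨n - k - 1, hj⟩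
          · subst hii; rw [Function.update_self]
          · rw [Function.update_of_ne hii]
            refine hx i ?_
            have hvne : (i:ℕ) ≠ n - k - 1 := by
              intro hv
              exact hii (Fin.ext hv)
            omega
        have ih := ihk hkn (Function.update x ⟨n - k - 1, hj⟩ e) hx'
        have hfun : (fun p : Fin k =>
              (Function.update x ⟨n - k - 1, hj⟩ e) ⟨n - k + (p:ℕ), by have := p.isLt; omega⟩)
            = (fun p : Fin k => x ⟨n - k + (p:ℕ), by have := p.isLt; omega⟩) := by
          funext p
          rw [Function.update_of_ne]
          intro hcon
          have := congrArg Fin.val hcon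
          simp only [] at this
          omega
        rw [hfun] at ih
        have hMterm : φ (Function.update x ⟨n - k - 1, hj⟩
            (e*(x ⟨n - k - 1, hj⟩)*(1-e))) = 0 :=
          M0 _ ⟨n - k - 1, hj⟩ (by rw [Function.update_self]; exact TLA.cornerPM he _)
        have hA := TLA.phiA he hφ x ⟨n - k - 1, hj⟩ (TLA.cornerPA he (x ⟨n - k - 1, hj⟩))
        have hB := TLA.phiB he hφ x ⟨n - k - 1, hj⟩ (TLA.cornerPB he (x ⟨n - k - 1, hj⟩))
        have hsum : e * φ x * (1-e)
            = (e*(x ⟨n - k - 1, hj⟩)*e) * (e * φ (Function.update x ⟨n - k - 1, hj⟩ e) * (1-e))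
              - (e * φ (Function.update x ⟨n - k - 1, hj⟩ e) * (1-e))
                * ((1-e)*(x ⟨n - k - 1, hj⟩)*(1-e)) := by
          rw [decomp x ⟨n - k - 1, hj⟩, hMterm]
          have expand : e*(φ (Function.update x ⟨n - k - 1, hj⟩ (e*(x ⟨n - k - 1, hj⟩)*e)) + 0
                + φ (Function.update x ⟨n - k - 1, hj⟩ ((1-e)*(x ⟨n - k - 1, hj⟩)*(1-e))))*(1-e)
              = e*(φ (Function.update x ⟨n - k - 1, hj⟩ (e*(x ⟨n - k - 1, hj⟩)*e)))*(1-e)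
                + e*(φ (Function.update x ⟨n - k - 1, hj⟩ ((1-e)*(x ⟨n - k - 1, hj⟩)*(1-e))))*(1-e) := by
            noncomm_ring
          rw [expand, hA, hB]
          noncomm_ring
        rw [hsum, ih]
        have hiter : iterBr (fun p : Fin (k+1) =>
              x ⟨n - (k+1) + (p:ℕ), by have := p.isLt; omega⟩) X0
            = brk (x ⟨n - k - 1, hj⟩)
              (iterBr (fun p : Fin k => x ⟨n - k + (p:ℕ), by have := p.isLt; omega⟩) X0) := by
          show brk ((fun p : Fin (k+1) => x ⟨n - (k+1) + (p:ℕ), by have := p.isLt; omega⟩) 0)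
              (iterBr (Fin.tail fun p : Fin (k+1) =>
                x ⟨n - (k+1) + (p:ℕ), by have := p.isLt; omega⟩) X0) = _
          have h0 : (fun p : Fin (k+1) =>
              x ⟨n - (k+1) + (p:ℕ), by have := p.isLt; omega⟩) 0 = x ⟨n - k - 1, hj⟩ := by
            exact congrArg x (Fin.ext (by show n - (k+1) + ((0 : Fin (k+1)):ℕ) = n - k - 1; simp only [Fin.val_zero]; omega))
          have htail : (Fin.tail fun p : Fin (k+1) =>
                x ⟨n - (k+1) + (p:ℕ), by have := p.isLt; omega⟩)
              = (fun p : Fin k => x ⟨n - k + (p:ℕ), by have := p.isLt; omega⟩) := by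
            funext p
            exact congrArg x (Fin.ext (by
              show n - (k+1) + ((p.succ : Fin (k+1)):ℕ) = n - k + (p:ℕ)
              simp only [Fin.val_succ]
              have := p.isLt
              omega))
          rw [h0, htail]
        rw [hiter]
        rw [TLA.brk_gM he htri (x ⟨n - k - 1, hj⟩)
          (TLA.iterBr_corner he htri hX0c
            (fun p : Fin k => x ⟨n - k + (p:ℕ), by have := p.isLt; omega⟩))]
    intro x
    have h := aux n (le_refl n) x (fun i hi => absurd hi (by omega))
    have hfx : (fun p : Fin n => x ⟨n - n + (p:ℕ), by have := p.isLt; omega⟩) = x := by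
      funext p
      exact congrArg x (Fin.ext (by show n - n + (p:ℕ) = (p:ℕ); omega))
    rw [hfx] at h
    exact h
  intro x
  have hνc : corner e (1-e) (iterBr x X0) := TLA.iterBr_corner he htri hX0c x
  refine TLA.central_of he htri hfa hfb ?_ ?_
  · rw [mul_sub e (φ x) (iterBr x X0), sub_mul (e * φ x) (e * iterBr x X0) (1-e),
      mpart x]
    have hν : e * iterBr x X0 * (1-e) = iterBr x X0 := hνc
    rw [hν, sub_self]
  · intro m hm
    have hz1 : e*(φ x - iterBr x X0)*e = e*(φ x)*e := by
      rw [mul_sub e (φ x) (iterBr x X0), sub_mul (e * φ x) (e * iterBr x X0) e,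
        TLA.eMe_zero he hνc, sub_zero]
    have hz2 : (1-e)*(φ x - iterBr x X0)*(1-e) = (1-e)*(φ x)*(1-e) := by
      rw [mul_sub (1-e) (φ x) (iterBr x X0),
        sub_mul ((1-e) * φ x) ((1-e) * iterBr x X0) (1-e),
        TLA.fMf_zero he hνc, sub_zero]
    rw [hz1, hz2]
    have h := compat x hm
    rw [TLA.brk_gM he htri (φ x) hm] at h
    exact sub_eq_zero.mp h
end
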